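/- arXiv:2402.00315 — 4 statements merged into one kernel-verified Lean document; each statement's English description precedes it below -/
import Mathlib

section
/- Let K ≥ 2 and T ≥ 1 be integers and let v_1,...,v_T ∈ [0,1]^K be an arbitrary sequence of loss vectors. Define weights by w^1_j = 1 for all j ∈ [K], w^{t+1}_j = w^t_j · e^{−η v_{t,j}} with learning rate η = √(2 log K / T), and normalized weights w̃^t_j = w^t_j / ∑_{i=1}^K w^t_i. Then the regret of the weighted majority (exponential weights) algorithm satisfies ∑_{t=1}^T ∑_{j=1}^K w̃^t_j · v_{t,j} − min_{i∈[K]} ∑_{t=1}^T v_{t,i} ≤ √(2 T log K). -/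
lemma exp_neg_le_quad {x : ℝ} (hx : 0 ≤ x) : Real.exp (-x) ≤ 1 - x + x^2/2 := by
  have hd : ∀ y : ℝ, HasDerivAt (fun z => Real.exp (-z) + z - z^2/2)
      (-Real.exp (-y) + 1 - y) y := by
    intro y
    have h1 : HasDerivAt (fun z : ℝ => -z) (-1) y := (hasDerivAt_id y).neg
    have h2 : HasDerivAt (fun z : ℝ => Real.exp (-z)) (Real.exp (-y) * (-1)) y :=
      (Real.hasDerivAt_exp (-y)).comp y h1
    have h3 : HasDerivAt (fun z : ℝ => z^2/2) y y := by
      have := (hasDerivAt_pow 2 y).div_const 2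
      simpa using this
    have h4 := (h2.add (hasDerivAt_id y)).sub h3
    exact h4.congr_deriv (by ring)
  have hmono : AntitoneOn (fun z => Real.exp (-z) + z - z^2/2) (Set.Ici 0) := by
    apply antitoneOn_of_deriv_nonpos (convex_Ici 0)
    · exact fun y _ => (hd y).continuousAt.continuousWithinAt
    · intro y _; exact (hd y).differentiableAt.differentiableWithinAt
    · intro y hy
      rw [(hd y).deriv]
      rw [interior_Ici] at hy
      nlinarith [Real.add_one_le_exp (-y), (Set.mem_Ioi.mp hy).le]
  have h := hmono (Set.self_mem_Ici) (show x ∈ Set.Ici (0:ℝ) from hx) hx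
  simp at h
  linarith

/-- **Regret bound for the weighted majority (exponential weights) algorithm.**
Let `v 0, ..., v (T-1) ∈ [0,1]^K` be an arbitrary sequence of loss vectors, and let the
weights evolve as `w 0 j = 1`, `w (t+1) j = w t j * exp (-η * v t j)` with learning rate
`η = √(2 log K / T)`.  Then the expected loss of the algorithm exceeds the loss of the best
expert by at most `√(2 T log K)`. -/
theorem wma_regret (K T : ℕ) (hK : 2 ≤ K) (hT : 1 ≤ T)
    (v : Fin T → Fin K → ℝ) (hv : ∀ t j, v t j ∈ Set.Icc (0 : ℝ) 1)
    (η : ℝ) (hη : η = Real.sqrt (2 * Real.log K / T))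
    (w : ℕ → Fin K → ℝ)
    (hw0 : ∀ j, w 0 j = 1)
    (hw : ∀ (t : Fin T) (j : Fin K),
      w (t.1 + 1) j = w t.1 j * Real.exp (-η * v t j)) :
    (∑ t : Fin T, ∑ j : Fin K, (w t.1 j / ∑ i : Fin K, w t.1 i) * v t j)
        - (⨅ i : Fin K, ∑ t : Fin T, v t i)
      ≤ Real.sqrt (2 * T * Real.log K) := by
  have hK1 : (1:ℝ) < K := by exact_mod_cast Nat.lt_of_lt_of_le one_lt_two hK
  have hlogK : 0 < Real.log K := Real.log_pos hK1
  have hT0 : (0:ℝ) < T := by exact_mod_cast hT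
  have hη0 : 0 < η := by
    rw [hη]; exact Real.sqrt_pos.2 (by positivity)
  -- losses extended to ℕ
  set V : ℕ → Fin K → ℝ := fun t j => if h : t < T then v ⟨t, h⟩ j else 0 with hVdef
  have hV0 : ∀ t j, 0 ≤ V t j := by
    intro t j; simp only [hVdef]; split
    · exact (hv _ j).1
    · exact le_refl 0
  have hV1 : ∀ t j, V t j ≤ 1 := by
    intro t j; simp only [hVdef]; split
    · exact (hv _ j).2
    · exact zero_le_one
  have hwstep : ∀ t < T, ∀ j, w (t+1) j = w t j * Real.exp (-η * V t j) := by
    intro t ht j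
    have := hw ⟨t, ht⟩ j
    simpa [hVdef, ht] using this
  -- explicit formula
  have hwf : ∀ t, t ≤ T → ∀ j, w t j = Real.exp (-η * ∑ s ∈ Finset.range t, V s j) := by
    intro t
    induction t with
    | zero => intro _ j; simp [hw0 j]
    | succ t ih =>
      intro ht j
      have ht' : t < T := ht
      rw [hwstep t ht' j, ih (le_of_lt ht') j, ← Real.exp_add, Finset.sum_range_succ]
      ring_nf
  have hwpos : ∀ t, t ≤ T → ∀ j, 0 < w t j := by
    intro t ht j; rw [hwf t ht j]; exact Real.exp_pos _
  set S : ℕ → ℝ := fun t => ∑ i, w t i with hSdef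
  have hSpos : ∀ t, t ≤ T → 0 < S t := by
    intro t ht
    have : Nonempty (Fin K) := ⟨⟨0, by omega⟩⟩
    exact Finset.sum_pos (fun j _ => hwpos t ht j) Finset.univ_nonempty
  set A : ℕ → ℝ := fun t => ∑ j, (w t j / S t) * V t j with hAdef
  -- per-step inequality
  have key : ∀ t < T, Real.log (S (t+1)) ≤ Real.log (S t) + (-(η * A t) + η^2/2) := by
    intro t ht
    have hSt := hSpos t (le_of_lt ht)
    have hSt1 := hSpos (t+1) ht
    have hwV : ∑ j, w t j * V t j = A t * S t := by
      rw [hAdef]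
      rw [Finset.sum_mul]
      apply Finset.sum_congr rfl
      intro j _
      field_simp
    have hub : S (t+1) ≤ S t * (1 - η * A t + η^2/2) := by
      have h1 : S (t+1) = ∑ j, w t j * Real.exp (-η * V t j) := by
        apply Finset.sum_congr rfl
        intro j _; exact hwstep t ht j
      have h2 : ∀ j : Fin K, w t j * Real.exp (-η * V t j)
          ≤ w t j * (1 - η * V t j + η^2/2) := by
        intro j
        apply mul_le_mul_of_nonneg_left _ (hwpos t (le_of_lt ht) j).le
        have hx : 0 ≤ η * V t j := mul_nonneg hη0.le (hV0 t j)
        have := exp_neg_le_quad hx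
        have hsq : (η * V t j)^2 ≤ η^2 := by
          have h1 : V t j ≤ 1 := hV1 t j
          have h0 : 0 ≤ V t j := hV0 t j
          have hV2 : V t j ^ 2 ≤ 1 := by nlinarith
          calc (η * V t j)^2 = η^2 * (V t j)^2 := by ring
            _ ≤ η^2 * 1 := mul_le_mul_of_nonneg_left hV2 (sq_nonneg η)
            _ = η^2 := mul_one _
        calc Real.exp (-η * V t j) = Real.exp (-(η * V t j)) := by ring_nf
          _ ≤ 1 - η * V t j + (η * V t j)^2/2 := this
          _ ≤ 1 - η * V t j + η^2/2 := by linarith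
      calc S (t+1) = ∑ j, w t j * Real.exp (-η * V t j) := h1
        _ ≤ ∑ j, w t j * (1 - η * V t j + η^2/2) := Finset.sum_le_sum fun j _ => h2 j
        _ = S t * (1 - η * A t + η^2/2) := by
            simp only [mul_add, mul_sub, mul_one, Finset.sum_add_distrib, Finset.sum_sub_distrib,
              ← Finset.mul_sum, ← Finset.sum_mul]
            rw [show ∑ j, w t j * (η * V t j) = η * ∑ j, w t j * V t j by
              rw [Finset.mul_sum]; apply Finset.sum_congr rfl; intro j _; ring]
            rw [hwV]
            ring
    have hcpos : 0 < 1 - η * A t + η^2/2 := by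
      have := hub
      nlinarith [hSt, hSt1]
    calc Real.log (S (t+1)) ≤ Real.log (S t * (1 - η * A t + η^2/2)) := by
          exact Real.log_le_log hSt1 hub
      _ = Real.log (S t) + Real.log (1 - η * A t + η^2/2) := Real.log_mul hSt.ne' hcpos.ne'
      _ ≤ Real.log (S t) + (-(η * A t) + η^2/2) := by
          have := Real.log_le_sub_one_of_pos hcpos
          linarith
  -- telescoping
  have htel : ∀ t, t ≤ T → Real.log (S t)
      ≤ Real.log (S 0) + ∑ s ∈ Finset.range t, (-(η * A s) + η^2/2) := by
    intro t
    induction t with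
    | zero => intro _; simp
    | succ t ih =>
      intro ht
      have ht' : t < T := ht
      have := key t ht'
      have h2 := ih (le_of_lt ht')
      rw [Finset.sum_range_succ]
      linarith
  have hS0 : S 0 = K := by
    simp [hSdef, hw0]
  have hmain := htel T (le_refl T)
  rw [hS0] at hmain
  have hsum : ∑ s ∈ Finset.range T, (-(η * A s) + η^2/2)
      = -(η * ∑ s ∈ Finset.range T, A s) + T * (η^2/2) := by
    rw [Finset.sum_add_distrib]
    simp [← Finset.mul_sum, Finset.sum_neg_distrib]
  rw [hsum] at hmain
  -- lower bound via best expert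
  haveI : Nonempty (Fin K) := ⟨⟨0, by omega⟩⟩
  obtain ⟨i₀, hi₀⟩ := Finite.exists_min (fun i : Fin K => ∑ t : Fin T, v t i)
  have hinf : (⨅ i : Fin K, ∑ t : Fin T, v t i) = ∑ t : Fin T, v t i₀ := by
    apply le_antisymm
    · exact ciInf_le (Set.Finite.bddBelow (Set.finite_range _)) i₀
    · exact le_ciInf hi₀
  have hlow : -(η * ∑ s ∈ Finset.range T, V s i₀) ≤ Real.log (S T) := by
    have hw' : w T i₀ ≤ S T := by
      rw [hSdef]
      exact Finset.single_le_sum (fun j _ => (hwpos T le_rfl j).le) (Finset.mem_univ i₀)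
    have := Real.log_le_log (hwpos T le_rfl i₀) hw'
    rw [hwf T le_rfl i₀, Real.log_exp] at this
    linarith
  -- convert sums
  have hAconv : (∑ t : Fin T, ∑ j : Fin K, (w t.1 j / ∑ i : Fin K, w t.1 i) * v t j)
      = ∑ s ∈ Finset.range T, A s := by
    rw [← Fin.sum_univ_eq_sum_range]
    apply Finset.sum_congr rfl
    intro t _
    apply Finset.sum_congr rfl
    intro j _
    congr 1
    simp [hVdef, t.2]
  have hVconv : ∑ s ∈ Finset.range T, V s i₀ = ∑ t : Fin T, v t i₀ := by
    rw [← Fin.sum_univ_eq_sum_range]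
    apply Finset.sum_congr rfl
    intro t _
    simp [hVdef, t.2]
  rw [hAconv, hinf]
  have hregret : η * ((∑ s ∈ Finset.range T, A s) - ∑ t : Fin T, v t i₀)
      ≤ Real.log K + T * (η^2/2) := by
    rw [← hVconv]
    nlinarith [hlow, hmain]
  -- arithmetic: log K / η + η T / 2 = √(2 T log K)
  have hη2 : η^2 = 2 * Real.log K / T := by
    rw [hη, Real.sq_sqrt (by positivity)]
  have hη2T : η^2 * T = 2 * Real.log K := by
    rw [hη2]; field_simp
  have h1 : Real.sqrt (2 * T * Real.log K) = η * T := by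
    rw [show 2 * (T:ℝ) * Real.log K = (η * T)^2 by linear_combination (-(T:ℝ)) * hη2T]
    exact Real.sqrt_sq (by positivity)
  have hfin : Real.log K + T * (η^2/2) = η * Real.sqrt (2 * T * Real.log K) := by
    rw [h1]; linear_combination (-(1:ℝ)/2) * hη2T
  rw [← mul_le_mul_iff_right₀ hη0, ← hfin]
  exact hregret
end

section
/- Let Y be a set, ε' > 0, δ ∈ (0,1), and let A_1,...,A_K be independent randomized algorithms from Y to ℝ, each of which is (ε',0)-differentially private, i.e., Pr(A_j(y) ∈ S) ≤ e^{ε'} · Pr(A_j(y') ∈ S) for all j ∈ [K], all y, y' ∈ Y and all measurable S ⊆ ℝ. Then the composition A(y) = (A_1(y),...,A_K(y)) : Y → ℝ^K is (K(ε')²/2 + √(2 ln(1/δ) · K · (ε')²), δ)-differentially private: for all y, y' ∈ Y and all measurable S ⊆ ℝ^K, Pr(A(y) ∈ S) ≤ e^{K(ε')²/2 + √(2 ln(1/δ) K (ε')²)} · Pr(A(y') ∈ S) + δ. -/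
open MeasureTheory ENNReal

open MeasureTheory ENNReal Real


lemma AC_sinh_le_mul_exp {t : ℝ} (ht : 0 ≤ t) : Real.sinh t ≤ t * Real.exp (t ^ 2 / 2) := by
  rw [Real.sinh_eq_tsum, Real.exp_eq_exp_ℝ, NormedSpace.exp_eq_tsum ℝ, ← tsum_mul_left]
  refine Summable.tsum_le_tsum (fun i ↦ ?_) t.hasSum_sinh.summable
    (((NormedSpace.expSeries_summable' (t ^ 2 / 2)).mul_left t))
  simp only [div_pow, pow_mul, smul_eq_mul, inv_mul_eq_div, div_div]
  rw [mul_div_assoc', ← pow_mul, ← pow_succ']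
  have h : ((2:ℝ) ^ i * i.factorial) ≤ ((2 * i + 1).factorial : ℝ) := by
    norm_cast
    calc 2 ^ i * i.factorial ≤ (2 * i).factorial :=
        Nat.two_pow_mul_factorial_le_factorial_two_mul _
      _ ≤ (2 * i + 1).factorial := Nat.factorial_le (by omega)
  gcongr

lemma AC_sinh_le_mul_cosh {t : ℝ} (ht : 0 ≤ t) : Real.sinh t ≤ t * Real.cosh t := by
  rw [Real.sinh_eq_tsum, Real.cosh_eq_tsum, ← tsum_mul_left]
  refine Summable.tsum_le_tsum (fun i ↦ ?_) t.hasSum_sinh.summable (t.hasSum_cosh.summable.mul_left t)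
  rw [mul_div_assoc', ← pow_succ']
  have h : (((2 * i).factorial : ℝ)) ≤ ((2 * i + 1).factorial : ℝ) := by
    norm_cast
    exact Nat.factorial_le (by omega)
  gcongr

lemma AC_cosh_sub_one {x : ℝ} (hx : 0 ≤ x) : Real.cosh x - 1 ≤ x / 2 * Real.sinh x := by
  have h := AC_sinh_le_mul_cosh (t := x / 2) (by positivity)
  have h5 : 0 ≤ Real.sinh (x / 2) := Real.sinh_nonneg_iff.2 (by positivity)
  have hc : Real.cosh x = Real.cosh (x / 2) ^ 2 + Real.sinh (x / 2) ^ 2 := by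
    have := Real.cosh_two_mul (x / 2); rwa [show 2 * (x / 2) = x by ring] at this
  have hs : Real.sinh x = 2 * Real.sinh (x / 2) * Real.cosh (x / 2) := by
    have := Real.sinh_two_mul (x / 2); rwa [show 2 * (x / 2) = x by ring] at this
  have h1 : Real.cosh (x / 2) ^ 2 = Real.sinh (x / 2) ^ 2 + 1 := Real.cosh_sq _
  nlinarith [mul_le_mul_of_nonneg_left h (by positivity : (0:ℝ) ≤ 2 * Real.sinh (x / 2))]

lemma AC_chord_sum {ε lam : ℝ} (hε : 0 < ε) (hlam : 0 ≤ lam) :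
    Real.exp (-(1 + lam) * ε) * (Real.exp ε - 1) + Real.exp ((1 + lam) * ε) * (1 - Real.exp (-ε))
      ≤ (Real.exp ε - Real.exp (-ε)) * Real.exp (lam * ε ^ 2 / 2 + lam ^ 2 * ε ^ 2 / 2) := by
  have h6 : 0 < Real.sinh ε := Real.sinh_pos_iff.2 hε
  have hkey : Real.sinh (lam * ε) * (Real.cosh ε - 1) + Real.cosh (lam * ε) * Real.sinh ε
      ≤ Real.sinh ε * Real.exp (lam * ε ^ 2 / 2 + lam ^ 2 * ε ^ 2 / 2) := by
    have h1 : Real.cosh (lam * ε) ≤ Real.exp ((lam * ε) ^ 2 / 2) := Real.cosh_le_exp_half_sq _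
    have h2 : Real.cosh ε - 1 ≤ ε / 2 * Real.sinh ε := AC_cosh_sub_one hε.le
    have h3 : Real.sinh (lam * ε) ≤ lam * ε * Real.exp ((lam * ε) ^ 2 / 2) :=
      AC_sinh_le_mul_exp (by positivity)
    have h4 : (1 : ℝ) + lam * ε ^ 2 / 2 ≤ Real.exp (lam * ε ^ 2 / 2) := by
      have := Real.add_one_le_exp (lam * ε ^ 2 / 2); linarith
    have h5 : 0 ≤ Real.sinh (lam * ε) := Real.sinh_nonneg_iff.2 (by positivity)
    have h7 : 0 ≤ Real.cosh ε - 1 := by have := Real.one_le_cosh ε; linarith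
    have hpos : (0:ℝ) < Real.exp ((lam * ε) ^ 2 / 2) := Real.exp_pos _
    calc Real.sinh (lam * ε) * (Real.cosh ε - 1) + Real.cosh (lam * ε) * Real.sinh ε
        ≤ (lam * ε * Real.exp ((lam * ε) ^ 2 / 2)) * (ε / 2 * Real.sinh ε)
            + Real.exp ((lam * ε) ^ 2 / 2) * Real.sinh ε := by gcongr
      _ = Real.sinh ε * (Real.exp ((lam * ε) ^ 2 / 2) * (1 + lam * ε ^ 2 / 2)) := by ring
      _ ≤ Real.sinh ε * (Real.exp ((lam * ε) ^ 2 / 2) * Real.exp (lam * ε ^ 2 / 2)) := by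
          gcongr
      _ = Real.sinh ε * Real.exp (lam * ε ^ 2 / 2 + lam ^ 2 * ε ^ 2 / 2) := by
          rw [← Real.exp_add]; ring_nf
  have h8 : Real.sinh ((1 + lam) * ε)
      = Real.sinh ε * Real.cosh (lam * ε) + Real.cosh ε * Real.sinh (lam * ε) := by
    rw [show (1 + lam) * ε = ε + lam * ε by ring, Real.sinh_add]
  have hL : Real.exp (-(1 + lam) * ε) * (Real.exp ε - 1)
        + Real.exp ((1 + lam) * ε) * (1 - Real.exp (-ε))
      = 2 * Real.sinh ((1 + lam) * ε) - 2 * Real.sinh (lam * ε) := by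
    have e1 : Real.exp ((1 + lam) * ε) = Real.exp ε * Real.exp (lam * ε) := by
      rw [← Real.exp_add]; congr 1; ring
    have e2 : Real.exp (-(1 + lam) * ε) = (Real.exp ε * Real.exp (lam * ε))⁻¹ := by
      rw [← e1, ← Real.exp_neg]; congr 1; ring
    have e3 : Real.exp (-ε) = (Real.exp ε)⁻¹ := Real.exp_neg ε
    rw [Real.sinh_eq, Real.sinh_eq, e1, e2, e3, Real.exp_neg, e1, Real.exp_neg]
    have hu : Real.exp ε ≠ 0 := (Real.exp_pos ε).ne'
    have hv : Real.exp (lam * ε) ≠ 0 := (Real.exp_pos _).ne'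
    field_simp
    ring
  have hR : Real.exp ε - Real.exp (-ε) = 2 * Real.sinh ε := by rw [Real.sinh_eq]; ring
  rw [hL, hR]
  nlinarith [hkey, h8]

section chord

variable {ε lam : ℝ}

/-- chord slope -/
noncomputable def ACc₁ (ε lam : ℝ) : ℝ :=
  (Real.exp ε ^ (1 + lam) - Real.exp (-ε) ^ (1 + lam)) / (Real.exp ε - Real.exp (-ε))

/-- chord intercept -/
noncomputable def ACc₀ (ε lam : ℝ) : ℝ :=
  Real.exp (-ε) ^ (1 + lam) - ACc₁ ε lam * Real.exp (-ε)

lemma AC_ab (hε : 0 < ε) : Real.exp (-ε) < Real.exp ε := Real.exp_lt_exp.2 (by linarith)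

lemma ACc₁_nonneg (hε : 0 < ε) (hlam : 0 ≤ lam) : 0 ≤ ACc₁ ε lam := by
  have h := AC_ab hε
  have : Real.exp (-ε) ^ (1 + lam) ≤ Real.exp ε ^ (1 + lam) :=
    Real.rpow_le_rpow (Real.exp_pos _).le h.le (by linarith)
  have h2 : (0:ℝ) < Real.exp ε - Real.exp (-ε) := by linarith
  exact div_nonneg (by linarith) h2.le

lemma ACc₀_nonpos (hε : 0 < ε) (hlam : 0 ≤ lam) : ACc₀ ε lam ≤ 0 := by
  have h := AC_ab hε
  have ha : (0:ℝ) < Real.exp (-ε) := Real.exp_pos _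
  have hb : (0:ℝ) < Real.exp ε := Real.exp_pos _
  have h2 : (0:ℝ) < Real.exp ε - Real.exp (-ε) := by linarith
  have hlam' : Real.exp (-ε) ^ lam ≤ Real.exp ε ^ lam :=
    Real.rpow_le_rpow ha.le h.le hlam
  have e1 : Real.exp (-ε) ^ (1 + lam) = Real.exp (-ε) * Real.exp (-ε) ^ lam := by
    rw [Real.rpow_add ha, Real.rpow_one]
  have e2 : Real.exp ε ^ (1 + lam) = Real.exp ε * Real.exp ε ^ lam := by
    rw [Real.rpow_add hb, Real.rpow_one]
  rw [ACc₀, ACc₁, e1, e2]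
  rw [sub_nonpos, div_mul_eq_mul_div, le_div_iff₀ h2]
  nlinarith [mul_le_mul_of_nonneg_left hlam' (mul_pos ha hb).le]

lemma AC_chord_pt (hε : 0 < ε) (hlam : 0 ≤ lam) {u : ℝ}
    (h1 : Real.exp (-ε) ≤ u) (h2 : u ≤ Real.exp ε) :
    u ^ (1 + lam) ≤ ACc₀ ε lam + ACc₁ ε lam * u := by
  have hab := AC_ab hε
  have ha : (0:ℝ) < Real.exp (-ε) := Real.exp_pos _
  have hd : (0:ℝ) < Real.exp ε - Real.exp (-ε) := by linarith
  set a := Real.exp (-ε)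
  set b := Real.exp ε
  set θ : ℝ := (b - u) / (b - a) with hθ
  have hθ0 : 0 ≤ θ := div_nonneg (by linarith) hd.le
  have hθ1 : 1 - θ ≥ 0 := by
    rw [hθ]; rw [ge_iff_le, sub_nonneg, div_le_one hd]; linarith
  have hu : θ * a + (1 - θ) * b = u := by rw [hθ]; field_simp; ring
  have hcx := (convexOn_rpow (p := 1 + lam) (by linarith)).2
    (Set.mem_Ici.2 ha.le) (Set.mem_Ici.2 (by linarith : (0:ℝ) ≤ b)) hθ0 hθ1 (by ring)
  simp only [smul_eq_mul] at hcx
  rw [hu] at hcx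
  refine hcx.trans (le_of_eq ?_)
  rw [ACc₀, ACc₁, hθ]
  simp only [a, b] at hd ⊢
  field_simp
  ring

lemma ACc_sum_le (hε : 0 < ε) (hlam : 0 ≤ lam) :
    ACc₀ ε lam + ACc₁ ε lam ≤ Real.exp (lam * ε ^ 2 / 2 + lam ^ 2 * ε ^ 2 / 2) := by
  have hab := AC_ab hε
  have hd : (0:ℝ) < Real.exp ε - Real.exp (-ε) := by linarith
  have e1 : Real.exp (-ε) ^ (1 + lam) = Real.exp (-(1 + lam) * ε) := by
    rw [show -(1 + lam) * ε = -ε * (1 + lam) by ring, Real.exp_mul]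
  have e2 : Real.exp ε ^ (1 + lam) = Real.exp ((1 + lam) * ε) := by
    rw [show (1 + lam) * ε = ε * (1 + lam) by ring, Real.exp_mul]
  have key := AC_chord_sum hε hlam
  rw [ACc₀, ACc₁, e1, e2]
  rw [show Real.exp (-(1 + lam) * ε) - (Real.exp ((1 + lam) * ε) - Real.exp (-(1 + lam) * ε)) /
      (Real.exp ε - Real.exp (-ε)) * Real.exp (-ε) + (Real.exp ((1 + lam) * ε) -
      Real.exp (-(1 + lam) * ε)) / (Real.exp ε - Real.exp (-ε))
    = (Real.exp (-(1 + lam) * ε) * (Real.exp ε - 1) + Real.exp ((1 + lam) * ε) *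
      (1 - Real.exp (-ε))) / (Real.exp ε - Real.exp (-ε)) by field_simp; ring]
  rw [div_le_iff₀ hd]
  linarith [key]

end chord

lemma AC_coord (ν : Measure ℝ) [IsProbabilityMeasure ν] {f : ℝ → ℝ≥0∞} (hf : Measurable f)
    (hfi : ∫⁻ t, f t ∂ν = 1) {ε lam : ℝ} (hε : 0 < ε) (hlam : 0 ≤ lam)
    (hub : ∀ᵐ t ∂ν, f t ≤ ENNReal.ofReal (Real.exp ε))
    (hlb : ∀ᵐ t ∂ν, ENNReal.ofReal (Real.exp (-ε)) ≤ f t) :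
    ∫⁻ t, f t ^ (1 + lam) ∂ν
      ≤ ENNReal.ofReal (Real.exp (lam * ε ^ 2 / 2 + lam ^ 2 * ε ^ 2 / 2)) := by
  set c₀ := ACc₀ ε lam with hc₀
  set c₁ := ACc₁ ε lam with hc₁
  have hc₀n := ACc₀_nonpos hε hlam
  have hc₁n := ACc₁_nonneg hε hlam
  -- pointwise a.e. bound
  have hpt : ∀ᵐ t ∂ν, f t ^ (1 + lam) + ENNReal.ofReal (-c₀) ≤ ENNReal.ofReal c₁ * f t := by
    filter_upwards [hub, hlb] with t h1 h2
    have hfin : f t ≠ ∞ := (h1.trans_lt ofReal_lt_top).ne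
    set u := (f t).toReal with hu
    have hfu : f t = ENNReal.ofReal u := by rw [hu, ENNReal.ofReal_toReal hfin]
    have hu1 : u ≤ Real.exp ε := by
      rw [hfu] at h1
      exact (ENNReal.ofReal_le_ofReal_iff (Real.exp_pos _).le).1 h1
    have hu2 : Real.exp (-ε) ≤ u := by
      rw [hfu] at h2
      exact (ENNReal.ofReal_le_ofReal_iff ENNReal.toReal_nonneg).1 h2
    have hu0 : 0 < u := lt_of_lt_of_le (Real.exp_pos _) hu2
    have hch := AC_chord_pt hε hlam hu2 hu1
    rw [hfu, ENNReal.ofReal_rpow_of_pos hu0, ← ENNReal.ofReal_add (by positivity) (by linarith),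
      ← ENNReal.ofReal_mul hc₁n]
    exact ENNReal.ofReal_le_ofReal (by linarith)
  -- integrate
  have hmeas : Measurable fun t => f t ^ (1 + lam) := hf.pow_const _
  have hint : ∫⁻ t, f t ^ (1 + lam) ∂ν + ENNReal.ofReal (-c₀) ≤ ENNReal.ofReal c₁ := by
    calc ∫⁻ t, f t ^ (1 + lam) ∂ν + ENNReal.ofReal (-c₀)
        = ∫⁻ t, (f t ^ (1 + lam) + ENNReal.ofReal (-c₀)) ∂ν := by
          rw [lintegral_add_right _ measurable_const, lintegral_const, measure_univ, mul_one]
      _ ≤ ∫⁻ t, ENNReal.ofReal c₁ * f t ∂ν := lintegral_mono_ae hpt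
      _ = ENNReal.ofReal c₁ := by rw [lintegral_const_mul _ hf, hfi, mul_one]
  have := ENNReal.le_sub_of_add_le_right ofReal_ne_top hint
  refine this.trans ?_
  rw [← ENNReal.ofReal_sub _ (by linarith)]
  exact ENNReal.ofReal_le_ofReal (by have := ACc_sum_le hε hlam; linarith)


lemma AC_lintegral_pi_prod : ∀ (n : ℕ) (m : Fin n → Measure ℝ),
    (∀ i, IsProbabilityMeasure (m i)) → ∀ (g : Fin n → ℝ → ℝ≥0∞), (∀ i, Measurable (g i)) →
    ∫⁻ x, ∏ i, g i (x i) ∂Measure.pi m = ∏ i, ∫⁻ t, g i t ∂m i := by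
  intro n
  induction n with
  | zero =>
      intro m hm g hg
      haveI := hm
      simp only [Finset.univ_eq_empty, Finset.prod_empty, lintegral_one]
      rw [Measure.pi_univ]
      simp
  | succ n ih =>
      intro m hm g hg
      haveI := hm
      have hgs : Measurable fun t : Fin n → ℝ => ∏ j : Fin n, g j.succ (t j) :=
        Finset.measurable_prod _ fun j _ => (hg j.succ).comp (measurable_pi_apply j)
      have hmeas : Measurable fun z : ℝ × (Fin n → ℝ) =>
          g 0 z.1 * ∏ j : Fin n, g j.succ (z.2 j) :=
        ((hg 0).comp measurable_fst).mul (hgs.comp measurable_snd)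
      have h0 := (measurePreserving_piFinSuccAbove m 0).lintegral_comp hmeas
      have hx : (fun x : Fin (n + 1) → ℝ =>
          g 0 ((MeasurableEquiv.piFinSuccAbove (fun _ => ℝ) 0 x).1) *
            ∏ j : Fin n, g j.succ ((MeasurableEquiv.piFinSuccAbove (fun _ => ℝ) 0 x).2 j))
          = fun x => ∏ i, g i (x i) := by
        funext x
        rw [Fin.prod_univ_succ]
        rfl
      rw [hx] at h0
      have htail : (fun j : Fin n => m ((0:Fin (n+1)).succAbove j)) = fun j => m j.succ := by
        funext j; simp [Fin.zero_succAbove]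
      calc ∫⁻ x, ∏ i, g i (x i) ∂Measure.pi m
          = ∫⁻ z : ℝ × (Fin n → ℝ), g 0 z.1 * ∏ j : Fin n, g j.succ (z.2 j)
              ∂(m 0).prod (Measure.pi fun j => m ((0:Fin (n+1)).succAbove j)) := h0
        _ = (∫⁻ t, g 0 t ∂m 0) * ∫⁻ t : Fin n → ℝ, ∏ j : Fin n, g j.succ (t j)
              ∂Measure.pi (fun j => m ((0:Fin (n+1)).succAbove j)) :=
            lintegral_prod_mul (hg 0).aemeasurable hgs.aemeasurable
        _ = (∫⁻ t, g 0 t ∂m 0) * ∏ j : Fin n, ∫⁻ t, g j.succ t ∂m j.succ := by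
            rw [htail, ih _ (fun j => hm j.succ) _ (fun j => hg j.succ)]
        _ = ∏ i, ∫⁻ t, g i t ∂m i :=
            (Fin.prod_univ_succ fun i => ∫⁻ t, g i t ∂m i).symm

lemma AC_indicator_prod {n : ℕ} (s : Fin n → Set ℝ) (f : Fin n → ℝ → ℝ≥0∞)
    (x : Fin n → ℝ) :
    Set.indicator (Set.pi Set.univ s) (fun x => ∏ i, f i (x i)) x
      = ∏ i, Set.indicator (s i) (f i) (x i) := by
  by_cases h : x ∈ Set.pi Set.univ s
  · rw [Set.indicator_of_mem h]
    exact Finset.prod_congr rfl fun i _ =>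
      (Set.indicator_of_mem (h i (Set.mem_univ i)) _).symm
  · rw [Set.indicator_of_notMem h]
    rw [Set.mem_pi] at h
    push_neg at h
    obtain ⟨i, _, hi⟩ := h
    exact (Finset.prod_eq_zero (Finset.mem_univ i) (Set.indicator_of_notMem hi _)).symm

lemma AC_pi_withDensity {n : ℕ} (m : Fin n → Measure ℝ) [∀ i, IsProbabilityMeasure (m i)]
    (f : Fin n → ℝ → ℝ≥0∞) (hf : ∀ i, Measurable (f i))
    (hP : ∀ i, IsProbabilityMeasure ((m i).withDensity (f i))) :
    Measure.pi (fun i => (m i).withDensity (f i))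
      = (Measure.pi m).withDensity fun x => ∏ i, f i (x i) := by
  haveI := hP
  refine Measure.pi_eq fun s hs => ?_
  calc ((Measure.pi m).withDensity fun x => ∏ i, f i (x i)) (Set.pi Set.univ s)
      = ∫⁻ x in Set.pi Set.univ s, ∏ i, f i (x i) ∂Measure.pi m :=
        withDensity_apply _ (MeasurableSet.univ_pi hs)
    _ = ∫⁻ x, Set.indicator (Set.pi Set.univ s) (fun x => ∏ i, f i (x i)) x ∂Measure.pi m :=
        (lintegral_indicator (MeasurableSet.univ_pi hs) _).symm
    _ = ∫⁻ x, ∏ i, Set.indicator (s i) (f i) (x i) ∂Measure.pi m := by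
        simp_rw [AC_indicator_prod s f]
    _ = ∏ i, ∫⁻ t, Set.indicator (s i) (f i) t ∂m i :=
        AC_lintegral_pi_prod n m inferInstance _ (fun i => (hf i).indicator (hs i))
    _ = ∏ i, ((m i).withDensity (f i)) (s i) := by
        refine Finset.prod_congr rfl fun i _ => ?_
        rw [withDensity_apply _ (hs i)]
        exact lintegral_indicator (hs i) (f i)


/-- **Advanced composition for independent private mechanisms.**
If `A 1, …, A K : Y → ℝ` are independent randomized algorithms, each `(ε', 0)`-differentially
private, then their independent composition `A y = (A 1 y, …, A K y) : Y → ℝ^K` is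
`(K ε'²/2 + √(2 ln(1/δ) K ε'²), δ)`-differentially private. -/
theorem advanced_composition {Y : Type*} (K : ℕ) (ε' δ : ℝ)
    (hε' : 0 < ε') (hδ : δ ∈ Set.Ioo (0 : ℝ) 1)
    (A : Fin K → Y → Measure ℝ)
    (hprob : ∀ j y, IsProbabilityMeasure (A j y))
    (hdp : ∀ j (y y' : Y) (S : Set ℝ), MeasurableSet S →
      A j y S ≤ ENNReal.ofReal (Real.exp ε') * A j y' S) :
    ∀ (y y' : Y) (S : Set (Fin K → ℝ)), MeasurableSet S →
      Measure.pi (fun j => A j y) S ≤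
        ENNReal.ofReal
            (Real.exp ((K : ℝ) * ε' ^ 2 / 2 +
              Real.sqrt (2 * Real.log (1 / δ) * K * ε' ^ 2))) *
          Measure.pi (fun j => A j y') S + ENNReal.ofReal δ := by
  intro y y' S hS
  haveI hPy : ∀ j, IsProbabilityMeasure (A j y) := fun j => hprob j y
  haveI hPy' : ∀ j, IsProbabilityMeasure (A j y') := fun j => hprob j y'
  obtain rfl | hK := Nat.eq_zero_or_pos K
  · have he : (fun j : Fin 0 => A j y) = fun j => A j y' := funext fun j => j.elim0
    rw [he]
    have h1 : (1:ℝ≥0∞) ≤ ENNReal.ofReal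
        (Real.exp ((0 : ℝ) * ε' ^ 2 / 2 + Real.sqrt (2 * Real.log (1 / δ) * 0 * ε' ^ 2))) := by
      simp
    calc Measure.pi (fun j : Fin 0 => A j y') S
        = 1 * Measure.pi (fun j : Fin 0 => A j y') S := (one_mul _).symm
      _ ≤ ENNReal.ofReal (Real.exp ((0:ℕ) * ε' ^ 2 / 2 +
            Real.sqrt (2 * Real.log (1 / δ) * (0:ℕ) * ε' ^ 2))) *
            Measure.pi (fun j : Fin 0 => A j y') S := by
          gcongr
          simpa using h1
      _ ≤ _ + ENNReal.ofReal δ := le_self_add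
  -- main case
  have hlog : 0 < Real.log (1 / δ) := Real.log_pos (one_lt_one_div hδ.1 hδ.2)
  have hKpos : (0:ℝ) < K := by exact_mod_cast hK
  set t : ℝ := Real.sqrt (2 * Real.log (1 / δ) * K * ε' ^ 2) with ht
  have htsq : (0:ℝ) < 2 * Real.log (1 / δ) * K * ε' ^ 2 := by positivity
  have htpos : 0 < t := Real.sqrt_pos.2 htsq
  have ht2 : t ^ 2 = 2 * Real.log (1 / δ) * K * ε' ^ 2 := Real.sq_sqrt htsq.le
  set lam : ℝ := t / (K * ε' ^ 2) with hlamdef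
  have hlam : 0 < lam := by positivity
  set εt : ℝ := (K : ℝ) * ε' ^ 2 / 2 + t with hεt
  -- densities
  have hacμ : ∀ j, A j y ≪ A j y' := by
    intro j
    refine Measure.AbsolutelyContinuous.mk fun s hs h0 => le_antisymm ?_ zero_le
    simpa [h0] using hdp j y y' s hs
  have hacν : ∀ j, A j y' ≪ A j y := by
    intro j
    refine Measure.AbsolutelyContinuous.mk fun s hs h0 => le_antisymm ?_ zero_le
    simpa [h0] using hdp j y' y s hs
  set f : Fin K → ℝ → ℝ≥0∞ := fun j => (A j y).rnDeriv (A j y') with hfdef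
  have hfm : ∀ j, Measurable (f j) := fun j => Measure.measurable_rnDeriv _ _
  have hwd : ∀ j, (A j y').withDensity (f j) = A j y :=
    fun j => Measure.withDensity_rnDeriv_eq _ _ (hacμ j)
  have hfi : ∀ j, ∫⁻ u, f j u ∂(A j y') = 1 := by
    intro j
    have h := congrArg (fun m : Measure ℝ => m Set.univ) (hwd j)
    simpa [withDensity_apply _ MeasurableSet.univ] using h
  -- a.e. upper bound
  have hub : ∀ j, ∀ᵐ u ∂(A j y'), f j u ≤ ENNReal.ofReal (Real.exp ε') := by
    intro j
    refine ae_le_of_forall_setLIntegral_le_of_sigmaFinite (hfm j) fun s hs _ => ?_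
    calc ∫⁻ u in s, f j u ∂(A j y') ≤ A j y s := Measure.setLIntegral_rnDeriv_le s
      _ ≤ ENNReal.ofReal (Real.exp ε') * A j y' s := hdp j y y' s hs
      _ = ∫⁻ _ in s, ENNReal.ofReal (Real.exp ε') ∂(A j y') := by
          rw [setLIntegral_const, mul_comm]
  have hinvc : (ENNReal.ofReal (Real.exp ε'))⁻¹ = ENNReal.ofReal (Real.exp (-ε')) := by
    rw [← ENNReal.ofReal_inv_of_pos (Real.exp_pos _), ← Real.exp_neg]
  -- a.e. lower bound
  have hlb : ∀ j, ∀ᵐ u ∂(A j y'), ENNReal.ofReal (Real.exp (-ε')) ≤ f j u := by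
    intro j
    have hub' : ∀ᵐ u ∂(A j y), (A j y').rnDeriv (A j y) u ≤ ENNReal.ofReal (Real.exp ε') := by
      refine ae_le_of_forall_setLIntegral_le_of_sigmaFinite
        (Measure.measurable_rnDeriv _ _) fun s hs _ => ?_
      calc ∫⁻ u in s, (A j y').rnDeriv (A j y) u ∂(A j y) ≤ A j y' s :=
            Measure.setLIntegral_rnDeriv_le s
        _ ≤ ENNReal.ofReal (Real.exp ε') * A j y s := hdp j y' y s hs
        _ = ∫⁻ _ in s, ENNReal.ofReal (Real.exp ε') ∂(A j y) := by
            rw [setLIntegral_const, mul_comm]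
    have hinv := Measure.inv_rnDeriv (hacμ j)
    have h1 : ∀ᵐ u ∂(A j y), ENNReal.ofReal (Real.exp (-ε')) ≤ f j u := by
      filter_upwards [hub', hinv] with u h2 h3
      have h4 : (f j u)⁻¹ ≤ ENNReal.ofReal (Real.exp ε') := by
        rw [hfdef]; dsimp only; rw [show ((A j y).rnDeriv (A j y') u)⁻¹
          = (((A j y).rnDeriv (A j y'))⁻¹ : ℝ → ℝ≥0∞) u from rfl, h3]
        exact h2
      calc ENNReal.ofReal (Real.exp (-ε')) = (ENNReal.ofReal (Real.exp ε'))⁻¹ := hinvc.symm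
        _ ≤ ((f j u)⁻¹)⁻¹ := ENNReal.inv_le_inv' h4
        _ = f j u := inv_inv _
    exact (hacν j).ae_le h1
  haveI hPwd : ∀ j, IsProbabilityMeasure ((A j y').withDensity (f j)) := by
    intro j; rw [hwd j]; exact hprob j y
  set N : Measure (Fin K → ℝ) := Measure.pi (fun j => A j y') with hN
  set F : (Fin K → ℝ) → ℝ≥0∞ := fun x => ∏ j, f j (x j) with hF
  have hFm : Measurable F :=
    Finset.measurable_prod _ fun j _ => (hfm j).comp (measurable_pi_apply j)
  have hMN : Measure.pi (fun j => A j y) = N.withDensity F := by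
    have h := AC_pi_withDensity (fun j => A j y') f hfm hPwd
    rw [funext hwd] at h
    exact h
  -- a.e. coordinatewise bounds on the product space
  have haeN : ∀ᵐ x ∂N, ∀ j : Fin K,
      f j (x j) ≤ ENNReal.ofReal (Real.exp ε') ∧
        ENNReal.ofReal (Real.exp (-ε')) ≤ f j (x j) := by
    rw [ae_all_iff]
    intro j
    have h1 : ∀ᵐ u ∂(A j y'), f j u ≤ ENNReal.ofReal (Real.exp ε') ∧
        ENNReal.ofReal (Real.exp (-ε')) ≤ f j u := (hub j).and (hlb j)
    rw [ae_iff] at h1 ⊢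
    exact Measure.pi_eval_preimage_null (fun j => A j y') (i := j) h1
  have haeF : ∀ᵐ x ∂N, F x ≠ 0 ∧ F x ≠ ∞ := by
    filter_upwards [haeN] with x hx
    constructor
    · have hpos : (0:ℝ≥0∞) < ∏ j : Fin K, f j (x j) :=
        CanonicallyOrderedAdd.prod_pos.mpr fun j _ =>
          lt_of_lt_of_le (ENNReal.ofReal_pos.2 (Real.exp_pos _)) (hx j).2
      exact hpos.ne'
    · exact ENNReal.prod_ne_top fun j _ =>
        ((hx j).1.trans_lt ENNReal.ofReal_lt_top).ne
  set E : Set (Fin K → ℝ) := {x | ENNReal.ofReal (Real.exp εt) < F x} with hE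
  have hEm : MeasurableSet E := measurableSet_lt measurable_const hFm
  -- Chernoff bound for the bad event
  have hdc : ENNReal.ofReal (Real.exp (-lam * εt)) * ENNReal.ofReal (Real.exp εt) ^ lam
      = 1 := by
    rw [ENNReal.ofReal_rpow_of_pos (Real.exp_pos _), ← Real.exp_mul,
      ← ENNReal.ofReal_mul (Real.exp_pos _).le, ← Real.exp_add,
      show -lam * εt + εt * lam = 0 by ring, Real.exp_zero, ENNReal.ofReal_one]
  have hptE : ∀ᵐ x ∂N, x ∈ E →
      F x ≤ ENNReal.ofReal (Real.exp (-lam * εt)) * F x ^ (1 + lam) := by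
    filter_upwards [haeF] with x hx hxE
    have hxE' : ENNReal.ofReal (Real.exp εt) < F x := hxE
    have hrp : ENNReal.ofReal (Real.exp εt) ^ lam ≤ F x ^ lam :=
      ENNReal.rpow_le_rpow hxE'.le hlam.le
    have hsplit : F x ^ (1 + lam) = F x * F x ^ lam := by
      rw [ENNReal.rpow_add _ _ hx.1 hx.2, ENNReal.rpow_one]
    calc F x = 1 * F x := (one_mul _).symm
      _ = ENNReal.ofReal (Real.exp (-lam * εt)) * ENNReal.ofReal (Real.exp εt) ^ lam * F x := by
          rw [hdc]
      _ ≤ ENNReal.ofReal (Real.exp (-lam * εt)) * F x ^ lam * F x := by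
          gcongr
      _ = ENNReal.ofReal (Real.exp (-lam * εt)) * F x ^ (1 + lam) := by
          rw [hsplit]; ring
  have hcoord : ∀ j, ∫⁻ u, f j u ^ (1 + lam) ∂(A j y')
      ≤ ENNReal.ofReal (Real.exp (lam * ε' ^ 2 / 2 + lam ^ 2 * ε' ^ 2 / 2)) :=
    fun j => AC_coord (A j y') (hfm j) (hfi j) hε' hlam.le (hub j) (hlb j)
  have hprodint : ∫⁻ x, F x ^ (1 + lam) ∂N
      = ∏ j, ∫⁻ u, f j u ^ (1 + lam) ∂(A j y') := by
    have hrw : ∀ x, F x ^ (1 + lam) = ∏ j, f j (x j) ^ (1 + lam) := by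
      intro x
      rw [hF]
      exact (ENNReal.prod_rpow_of_nonneg (r := 1 + lam) (by linarith)).symm
    simp_rw [hrw]
    exact AC_lintegral_pi_prod K _ inferInstance _ fun j => (hfm j).pow_const _
  have harith : Real.exp (-lam * εt) *
      Real.exp (lam * ε' ^ 2 / 2 + lam ^ 2 * ε' ^ 2 / 2) ^ (K:ℕ) ≤ δ := by
    rw [← Real.exp_nat_mul, ← Real.exp_add]
    have hexp : -lam * εt + (K:ℝ) * (lam * ε' ^ 2 / 2 + lam ^ 2 * ε' ^ 2 / 2)
        = Real.log δ := by
      have hne : (K:ℝ) * ε' ^ 2 ≠ 0 := by positivity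
      have hlogd : Real.log (1/δ) = -Real.log δ := by
        rw [one_div, Real.log_inv]
      have : -lam * εt + (K:ℝ) * (lam * ε' ^ 2 / 2 + lam ^ 2 * ε' ^ 2 / 2)
          = -(t^2) / (2 * ((K:ℝ) * ε' ^ 2)) := by
        rw [hεt, hlamdef]
        field_simp
        ring
      rw [this, ht2, hlogd]
      field_simp
    rw [hexp, Real.exp_log hδ.1]
  have hbad : Measure.pi (fun j => A j y) E ≤ ENNReal.ofReal δ := by
    rw [hMN, withDensity_apply _ hEm]
    calc ∫⁻ x in E, F x ∂N
        ≤ ∫⁻ x in E, ENNReal.ofReal (Real.exp (-lam * εt)) * F x ^ (1 + lam) ∂N := by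
          refine lintegral_mono_ae ?_
          exact (ae_restrict_iff' hEm).2 hptE
      _ ≤ ∫⁻ x, ENNReal.ofReal (Real.exp (-lam * εt)) * F x ^ (1 + lam) ∂N :=
          lintegral_mono_set (Set.subset_univ _) |>.trans (by rw [Measure.restrict_univ])
      _ = ENNReal.ofReal (Real.exp (-lam * εt)) * ∫⁻ x, F x ^ (1 + lam) ∂N :=
          lintegral_const_mul _ (hFm.pow_const _)
      _ ≤ ENNReal.ofReal (Real.exp (-lam * εt)) *
            ∏ j : Fin K, ENNReal.ofReal (Real.exp (lam * ε' ^ 2 / 2 + lam ^ 2 * ε' ^ 2 / 2)) := by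
          rw [hprodint]
          exact mul_le_mul_right (Finset.prod_le_prod' fun j _ => hcoord j) _
      _ = ENNReal.ofReal (Real.exp (-lam * εt) *
            Real.exp (lam * ε' ^ 2 / 2 + lam ^ 2 * ε' ^ 2 / 2) ^ (K:ℕ)) := by
          rw [Finset.prod_const, Finset.card_univ, Fintype.card_fin,
            ← ENNReal.ofReal_pow (Real.exp_pos _).le,
            ← ENNReal.ofReal_mul (Real.exp_pos _).le]
      _ ≤ ENNReal.ofReal δ := ENNReal.ofReal_le_ofReal harith
  -- split the integral
  have hmain : Measure.pi (fun j => A j y) S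
      ≤ ENNReal.ofReal (Real.exp εt) * N S + Measure.pi (fun j => A j y) E := by
    nth_rewrite 1 [hMN]
    rw [withDensity_apply _ hS]
    calc ∫⁻ x in S, F x ∂N
        ≤ ∫⁻ x in (S ∩ E) ∪ (S ∩ Eᶜ), F x ∂N :=
          lintegral_mono_set (by rw [Set.inter_union_compl])
      _ ≤ ∫⁻ x in S ∩ E, F x ∂N + ∫⁻ x in S ∩ Eᶜ, F x ∂N := lintegral_union_le _ _ _
      _ ≤ Measure.pi (fun j => A j y) E + ENNReal.ofReal (Real.exp εt) * N S := by
          gcongr ?_ + ?_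
          · rw [hMN, withDensity_apply _ hEm]
            exact lintegral_mono_set Set.inter_subset_right
          · calc ∫⁻ x in S ∩ Eᶜ, F x ∂N
                ≤ ∫⁻ _ in S ∩ Eᶜ, ENNReal.ofReal (Real.exp εt) ∂N := by
                  refine setLIntegral_mono measurable_const fun x hx => ?_
                  have : ¬ (ENNReal.ofReal (Real.exp εt) < F x) := hx.2
                  exact not_lt.1 this
              _ = ENNReal.ofReal (Real.exp εt) * N (S ∩ Eᶜ) := by
                  rw [setLIntegral_const]
              _ ≤ ENNReal.ofReal (Real.exp εt) * N S :=
                  mul_le_mul_right (measure_mono Set.inter_subset_left) _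
      _ = ENNReal.ofReal (Real.exp εt) * N S + Measure.pi (fun j => A j y) E := by ring
  calc Measure.pi (fun j => A j y) S
      ≤ ENNReal.ofReal (Real.exp εt) * N S + Measure.pi (fun j => A j y) E := hmain
    _ ≤ ENNReal.ofReal (Real.exp εt) * N S + ENNReal.ofReal δ := add_le_add_right hbad _
end

section
/- Fix ε > 0, δ ∈ (0,1), and integers K ≥ 1, T ≥ 2, M ≥ 1, N' ≥ 1. Let g_1,...,g_K : [N'] → ℝ be functions with 1/(TKM) ≤ g_j(v) ≤ 1/M for all j ∈ [K], v ∈ [N'] (the clipped distributions p̄_{t,j}[·]). Let h be any random map from Y to [N'] (the random clipping map), let Lap_1,...,Lap_K be i.i.d. Laplace random variables with scale (2√(2K ln(1/δ)) + √(Kε))·log(KT)/ε, independent of h, and let c, c' be any real constants. Define the randomized map R : Y → ℝ^K by R(y)_j = −c·( log(g_j(h(y))) + Lap_j + log M − c' ). Then R is (ε,δ)-locally differentially private: for all y, y' ∈ Y and all measurable S ⊆ ℝ^K, Pr(R(y) ∈ S) ≤ e^ε · Pr(R(y') ∈ S) + δ. -/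
open MeasureTheory ENNReal

/-- The Laplace distribution on `ℝ` with scale `b`, i.e. the measure with density
`x ↦ (1/(2b)) · exp(−|x|/b)` with respect to Lebesgue measure. -/
noncomputable def laplaceMeasure (b : ℝ) : Measure ℝ :=
  MeasureTheory.volume.withDensity fun x =>
    ENNReal.ofReal ((1 / (2 * b)) * Real.exp (-|x| / b))

set_option maxHeartbeats 1000000

namespace LDP
open Set

lemma lapdens_meas (b : ℝ) :
    Measurable fun x : ℝ => ENNReal.ofReal ((1 / (2 * b)) * Real.exp (-|x| / b)) := by
  fun_prop

lemma lap_apply (b : ℝ) {s : Set ℝ} (hs : MeasurableSet s) :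
    laplaceMeasure b s = ∫⁻ t in s, ENNReal.ofReal ((1 / (2 * b)) * Real.exp (-|t| / b)) := by
  rw [laplaceMeasure, withDensity_apply _ hs]

lemma integral_dens_Ioi {b u : ℝ} (hb : 0 < b) (hu : 0 ≤ u) :
    ∫ t in Ioi u, (1 / (2 * b)) * Real.exp (-|t| / b) = Real.exp (-u / b) / 2 := by
  have h1 : ∀ t ∈ Ioi u, (1 / (2 * b)) * Real.exp (-|t| / b)
      = (1 / (2 * b)) * Real.exp (-((1/b) * t)) := by
    intro t ht
    have : 0 < t := lt_of_le_of_lt hu ht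
    rw [abs_of_pos this]
    ring_nf
  rw [setIntegral_congr_fun measurableSet_Ioi h1, integral_const_mul]
  have h2 : (∫ t in Ioi u, Real.exp (-((1/b) * t)))
      = (1/b)⁻¹ • ∫ x in Ioi ((1/b) * u), Real.exp (-x) :=
    integral_comp_mul_left_Ioi (fun x => Real.exp (-x)) u (by positivity)
  rw [h2, integral_exp_neg_Ioi]
  field_simp
  ring

lemma integrableOn_dens_Ioi {b u : ℝ} (hb : 0 < b) (hu : 0 ≤ u) :
    IntegrableOn (fun t => (1 / (2 * b)) * Real.exp (-|t| / b)) (Ioi u) := by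
  have h1 : IntegrableOn (fun t => Real.exp (-(1/b) * t)) (Ioi u) :=
    exp_neg_integrableOn_Ioi u (by positivity)
  have h2 : IntegrableOn (fun t => (1 / (2*b)) * Real.exp (-(1/b) * t)) (Ioi u) := h1.const_mul _
  apply h2.congr_fun _ measurableSet_Ioi
  intro t ht
  have h3 : 0 < t := lt_of_le_of_lt hu ht
  simp only [abs_of_pos h3]
  ring_nf

lemma lap_Ioi {b u : ℝ} (hb : 0 < b) (hu : 0 ≤ u) :
    laplaceMeasure b (Ioi u) = ENNReal.ofReal (Real.exp (-u / b) / 2) := by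
  rw [lap_apply b measurableSet_Ioi, ← integral_dens_Ioi hb hu]
  exact (ofReal_integral_eq_lintegral_ofReal (integrableOn_dens_Ioi hb hu)
    (by filter_upwards with t; positivity)).symm

lemma lap_Ici {b u : ℝ} (hb : 0 < b) (hu : 0 ≤ u) :
    laplaceMeasure b (Ici u) = ENNReal.ofReal (Real.exp (-u / b) / 2) := by
  have h0 : laplaceMeasure b {u} = 0 := by
    rw [lap_apply b (measurableSet_singleton u), Measure.restrict_eq_zero.mpr (by simp)]
    simp
  have : Ici u = {u} ∪ Ioi u := by
    ext t; simp [le_iff_lt_or_eq, eq_comm, or_comm]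
  rw [this, measure_union (by simp [Set.disjoint_left]) measurableSet_Ioi, h0, lap_Ioi hb hu,
    zero_add]

lemma lintegral_volume_neg (f : ℝ → ℝ≥0∞) (hf : Measurable f) :
    ∫⁻ t, f (-t) = ∫⁻ t, f t := by
  conv_rhs => rw [← Measure.map_neg_eq_self (volume : Measure ℝ)]
  rw [lintegral_map hf measurable_neg]

lemma lap_Iic {b u : ℝ} (hb : 0 < b) (hu : 0 ≤ u) :
    laplaceMeasure b (Iic (-u)) = ENNReal.ofReal (Real.exp (-u / b) / 2) := by
  rw [← lap_Ici hb hu, lap_apply b measurableSet_Iic, lap_apply b measurableSet_Ici,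
    ← lintegral_indicator measurableSet_Iic _, ← lintegral_indicator measurableSet_Ici _]
  rw [← lintegral_volume_neg _ (((lapdens_meas b)).indicator measurableSet_Ici)]
  apply lintegral_congr
  intro t
  by_cases ht : t ∈ Iic (-u)
  · rw [Set.indicator_of_mem ht, Set.indicator_of_mem (by simp at ht ⊢; linarith)]
    simp [abs_neg]
  · rw [Set.indicator_of_notMem ht, Set.indicator_of_notMem (by simp at ht ⊢; linarith)]

lemma lap_prob {b : ℝ} (hb : 0 < b) : IsProbabilityMeasure (laplaceMeasure b) := by
  constructor
  have h : (univ : Set ℝ) = Iic (-0:ℝ) ∪ Ioi 0 := by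
    ext t
    simp only [mem_univ, mem_union, mem_Iic, mem_Ioi, neg_zero, true_iff]
    exact le_or_gt t 0
  rw [h, measure_union (by simp [Set.disjoint_left]) measurableSet_Ioi,
    lap_Iic hb le_rfl, lap_Ioi hb le_rfl]
  rw [← ENNReal.ofReal_add (by positivity) (by positivity)]
  norm_num

lemma sinh_le_mul_cosh {y : ℝ} (hy : 0 ≤ y) : Real.sinh y ≤ y * Real.cosh y := by
  have hs := Real.hasSum_sinh y
  have hc := (Real.hasSum_cosh y).mul_left y
  refine hasSum_le (fun n => ?_) hs hc
  have h1 : y ^ (2 * n + 1) = y * y ^ (2 * n) := by ring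
  rw [h1, mul_div_assoc]
  refine mul_le_mul_of_nonneg_left ?_ hy
  refine div_le_div_of_nonneg_left (by positivity) (by exact_mod_cast Nat.factorial_pos (2*n)) ?_
  exact_mod_cast Nat.factorial_le (Nat.le_succ (2 * n))

-- product lintegral over pi measure
lemma lintegral_pi_prod : ∀ {n : ℕ} (μ : Fin n → Measure ℝ), (∀ i, SigmaFinite (μ i)) →
    ∀ (f : Fin n → ℝ → ℝ≥0∞), (∀ i, Measurable (f i)) →
    ∫⁻ x, ∏ i, f i (x i) ∂Measure.pi μ = ∏ i, ∫⁻ t, f i t ∂μ i := by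
  intro n
  induction n with
  | zero =>
    intro μ _ f _
    simp only [Finset.univ_eq_empty, Finset.prod_empty, lintegral_one]
    rw [Measure.pi_univ]
    simp
  | succ n ih =>
    intro μ hσ f hf
    haveI := hσ
    have hp := (measurePreserving_piFinSuccAbove μ 0).symm
    rw [← MeasurePreserving.lintegral_comp hp (by
      apply Finset.measurable_prod
      intro i _
      exact (hf i).comp (measurable_pi_apply i))]
    have key : ∀ p : ℝ × (Fin n → ℝ),
        (∏ i, f i (((MeasurableEquiv.piFinSuccAbove (fun _ => ℝ) 0).symm p) i))
        = f 0 p.1 * ∏ j : Fin n, f (Fin.succ j) (p.2 j) := by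
      intro p
      rw [Fin.prod_univ_succ]
      have h0 : ((MeasurableEquiv.piFinSuccAbove (fun _ => ℝ) 0).symm p) 0 = p.1 := by
        simp [MeasurableEquiv.piFinSuccAbove]
      have hsa : ∀ j : Fin n,
          ((MeasurableEquiv.piFinSuccAbove (fun _ => ℝ) 0).symm p) (Fin.succ j) = p.2 j := by
        intro j
        have h : Fin.succ j = (0 : Fin (n+1)).succAbove j := by simp [Fin.succAbove_zero]
        rw [h]
        simp [MeasurableEquiv.piFinSuccAbove]
      simp only [h0, hsa]
    simp only [key]
    have hmul := lintegral_prod_mul (μ := μ 0)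
      (ν := Measure.pi fun j => μ (Fin.succAbove 0 j)) (f := f 0)
      (g := fun z : Fin n → ℝ => ∏ j : Fin n, f (Fin.succ j) (z j)) ((hf 0).aemeasurable)
      ((Finset.measurable_prod _ fun i _ => (hf _).comp (measurable_pi_apply i)).aemeasurable)
    rw [hmul, ih _ (fun i => hσ _) _ (fun i => hf _), Fin.prod_univ_succ]
    simp [Fin.succAbove_zero]

lemma pi_withDensity {n : ℕ} (μ : Fin n → Measure ℝ) [∀ i, SigmaFinite (μ i)]
    (f : Fin n → ℝ → ℝ≥0∞) (hf : ∀ i, Measurable (f i))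
    (hσ : ∀ i, SigmaFinite ((μ i).withDensity (f i))) :
    Measure.pi (fun i => (μ i).withDensity (f i))
      = (Measure.pi μ).withDensity fun x => ∏ i, f i (x i) := by
  haveI := hσ
  have main : ∀ s : Fin n → Set ℝ, (∀ i, MeasurableSet (s i)) →
      ((Measure.pi μ).withDensity fun x => ∏ i, f i (x i)) (univ.pi s)
        = ∏ i, ((μ i).withDensity (f i)) (s i) := by
    intro s hs
    rw [withDensity_apply _ (MeasurableSet.univ_pi hs),
      ← lintegral_indicator (MeasurableSet.univ_pi hs) _]
    have key : ∀ x : Fin n → ℝ, (univ.pi s).indicator (fun x => ∏ i, f i (x i)) x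
        = ∏ i, (f i (x i) * (s i).indicator 1 (x i)) := by
      intro x
      by_cases hx : x ∈ univ.pi s
      · rw [indicator_of_mem hx]
        apply Finset.prod_congr rfl
        intro i _
        rw [indicator_of_mem (hx i (Set.mem_univ i)), Pi.one_apply, mul_one]
      · rw [indicator_of_notMem hx]
        rw [mem_univ_pi] at hx
        push_neg at hx
        obtain ⟨i, hi⟩ := hx
        symm
        apply Finset.prod_eq_zero (Finset.mem_univ i)
        rw [indicator_of_notMem hi, mul_zero]
    
    simp only [key]
    rw [lintegral_pi_prod μ inferInstance (fun i t => f i t * (s i).indicator 1 t)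
      (fun i => (hf i).mul (measurable_one.indicator (hs i)))]
    apply Finset.prod_congr rfl
    intro i _
    rw [withDensity_apply _ (hs i), ← lintegral_indicator (hs i) _]
    apply lintegral_congr
    intro t
    by_cases ht : t ∈ s i
    · rw [indicator_of_mem ht, indicator_of_mem ht, Pi.one_apply, mul_one]
    · rw [indicator_of_notMem ht, indicator_of_notMem ht, mul_zero]
  exact Measure.pi_eq main

lemma real_mgf_bound {a b θ : ℝ} (hb : 0 < b) (ha : 0 ≤ a) (hθ : 0 ≤ θ) :
    Real.exp (θ * a) * (1 - Real.exp (-a/b)/2) + Real.exp (-(θ * a)) * (Real.exp (-a/b)/2)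
      ≤ Real.exp (θ^2 * a^2 / 2 + θ * a^2 / b) := by
  have hθa : 0 ≤ θ * a := by positivity
  have key : Real.exp (θ * a) * (1 - Real.exp (-a/b)/2)
      + Real.exp (-(θ * a)) * (Real.exp (-a/b)/2)
      = Real.cosh (θ * a) + Real.sinh (θ * a) * (1 - Real.exp (-a/b)) := by
    rw [← Real.cosh_add_sinh, ← Real.cosh_sub_sinh]; ring
  rw [key]
  have h1 : 1 - Real.exp (-a/b) ≤ a / b := by
    have h0 := Real.add_one_le_exp (-a/b)
    linarith [h0, show -a/b = -(a/b) from by ring]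
  have hsinh : 0 ≤ Real.sinh (θ * a) := by
    have : Real.sinh 0 ≤ Real.sinh (θ * a) := Real.sinh_le_sinh.mpr hθa
    simpa using this
  have step1 : Real.cosh (θ * a) + Real.sinh (θ * a) * (1 - Real.exp (-a/b))
      ≤ Real.cosh (θ * a) + (θ * a * Real.cosh (θ * a)) * (a / b) := by
    have h2 : Real.sinh (θ * a) * (1 - Real.exp (-a/b)) ≤ Real.sinh (θ * a) * (a/b) :=
      mul_le_mul_of_nonneg_left h1 hsinh
    have h3 : Real.sinh (θ * a) * (a/b) ≤ (θ * a * Real.cosh (θ * a)) * (a/b) :=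
      mul_le_mul_of_nonneg_right (sinh_le_mul_cosh hθa) (by positivity)
    linarith
  refine step1.trans ?_
  have step2 : Real.cosh (θ * a) + (θ * a * Real.cosh (θ * a)) * (a / b)
      = Real.cosh (θ * a) * (1 + θ * a^2 / b) := by ring
  rw [step2, Real.exp_add]
  have h4 : Real.cosh (θ * a) ≤ Real.exp (θ^2 * a^2 / 2) := by
    have := Real.cosh_le_exp_half_sq (θ * a)
    have he : (θ * a)^2 / 2 = θ^2 * a^2 / 2 := by ring
    rwa [he] at this
  have h5 : 1 + θ * a^2 / b ≤ Real.exp (θ * a^2 / b) := by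
    have := Real.add_one_le_exp (θ * a^2 / b)
    linarith
  exact mul_le_mul h4 h5 (by positivity) (Real.exp_nonneg _)

lemma mgf_le {b s θ : ℝ} (hb : 0 < b) (hθ : 0 ≤ θ) :
    ∫⁻ t, ENNReal.ofReal (Real.exp (θ * (|t + s| - |t|))) ∂laplaceMeasure b
      ≤ ENNReal.ofReal (Real.exp (θ^2 * s^2 / 2 + θ * s^2 / b)) := by
  haveI := lap_prob hb
  set a : ℝ := |s| with hadef
  have ha : 0 ≤ a := abs_nonneg s
  obtain ⟨T, hTmeas, hTval, hTeq⟩ :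
      ∃ T : Set ℝ, MeasurableSet T ∧
        laplaceMeasure b T = ENNReal.ofReal (Real.exp (-a/b)/2) ∧
        ∀ t ∈ T, |t + s| - |t| = -a := by
    rcases le_or_gt 0 s with hs | hs
    · refine ⟨Iic (-s), measurableSet_Iic, ?_, ?_⟩
      · rw [hadef, abs_of_nonneg hs]; exact lap_Iic hb hs
      · intro t ht
        simp only [mem_Iic] at ht
        rw [hadef, abs_of_nonneg hs, abs_of_nonpos (by linarith), abs_of_nonpos (by linarith)]
        ring
    · refine ⟨Ioi (-s), measurableSet_Ioi, ?_, ?_⟩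
      · rw [hadef, abs_of_neg hs]
        have := lap_Ioi hb (by linarith : (0:ℝ) ≤ -s)
        simpa using this
      · intro t ht
        simp only [mem_Ioi] at ht
        rw [hadef, abs_of_neg hs, abs_of_pos (by linarith), abs_of_pos (by linarith)]
        ring
  have hub : ∀ t : ℝ, |t + s| - |t| ≤ a := by
    intro t
    rw [hadef]
    calc |t + s| - |t| ≤ |t + s - t| := abs_sub_abs_le_abs_sub _ _
    _ = |s| := by ring_nf
  rw [← lintegral_add_compl _ hTmeas]
  have b1 : ∫⁻ t in T, ENNReal.ofReal (Real.exp (θ * (|t + s| - |t|))) ∂laplaceMeasure b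
      = ENNReal.ofReal (Real.exp (-(θ * a))) * ENNReal.ofReal (Real.exp (-a/b)/2) := by
    rw [setLIntegral_congr_fun (f := fun t => ENNReal.ofReal (Real.exp (θ * (|t + s| - |t|))))
      (g := fun _ => ENNReal.ofReal (Real.exp (-(θ * a)))) hTmeas
      (fun t ht => by simp only [hTeq t ht, mul_neg])]
    rw [setLIntegral_const, hTval]
  have b2 : ∫⁻ t in Tᶜ, ENNReal.ofReal (Real.exp (θ * (|t + s| - |t|))) ∂laplaceMeasure b
      ≤ ENNReal.ofReal (Real.exp (θ * a)) * ENNReal.ofReal (1 - Real.exp (-a/b)/2) := by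
    have hcompl : laplaceMeasure b Tᶜ = ENNReal.ofReal (1 - Real.exp (-a/b)/2) := by
      rw [measure_compl hTmeas (measure_ne_top _ _), hTval, measure_univ]
      rw [← ENNReal.ofReal_one, ← ENNReal.ofReal_sub _ (by positivity)]
    rw [← hcompl, ← setLIntegral_const]
    apply setLIntegral_mono measurable_const
    intro t _
    exact ENNReal.ofReal_le_ofReal (Real.exp_le_exp.mpr
      (mul_le_mul_of_nonneg_left (hub t) hθ))
  calc _ ≤ ENNReal.ofReal (Real.exp (-(θ * a))) * ENNReal.ofReal (Real.exp (-a/b)/2)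
        + ENNReal.ofReal (Real.exp (θ * a)) * ENNReal.ofReal (1 - Real.exp (-a/b)/2) := by
        rw [b1]; exact add_le_add_right b2 _
    _ = ENNReal.ofReal (Real.exp (θ * a) * (1 - Real.exp (-a/b)/2)
        + Real.exp (-(θ * a)) * (Real.exp (-a/b)/2)) := by
        have hle : Real.exp (-a/b) ≤ 1 := by
          rw [← Real.exp_zero]
          apply Real.exp_le_exp.mpr
          have : 0 ≤ a / b := by positivity
          linarith [show -a/b = -(a/b) from by ring]
        have hnn : 0 ≤ 1 - Real.exp (-a/b)/2 := by linarith
        rw [← ENNReal.ofReal_mul (Real.exp_nonneg _), ← ENNReal.ofReal_mul (Real.exp_nonneg _),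
          ← ENNReal.ofReal_add (by positivity) (by positivity), add_comm]
    _ ≤ ENNReal.ofReal (Real.exp (θ^2 * a^2 / 2 + θ * a^2 / b)) :=
        ENNReal.ofReal_le_ofReal (real_mgf_bound hb ha hθ)
    _ = ENNReal.ofReal (Real.exp (θ^2 * s^2 / 2 + θ * s^2 / b)) := by
        rw [hadef, sq_abs]

lemma chernoff {K : ℕ} (hK : 1 ≤ K) {ε δ Δ b : ℝ} (hε : 0 < ε) (hδ : δ ∈ Set.Ioo (0:ℝ) 1)
    (hΔ : 0 < Δ)
    (hb : b = (2 * Real.sqrt (2 * K * Real.log (1 / δ)) + Real.sqrt (K * ε)) * Δ / ε)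
    (s : Fin K → ℝ) (hs : ∀ j, |s j| ≤ Δ) :
    (Measure.pi fun _ : Fin K => laplaceMeasure b)
      {x | ε * b < ∑ j, (|x j + s j| - |x j|)} ≤ ENNReal.ofReal δ := by
  have hKpos : (0:ℝ) < K := by exact_mod_cast hK
  set r := Real.log (1 / δ) with hrdef
  have hr : 0 < r := Real.log_pos (one_lt_one_div hδ.1 hδ.2)
  set S₁ := Real.sqrt (2 * K * r) with hS1def
  set S₂ := Real.sqrt (K * ε) with hS2def
  have hS1 : 0 < S₁ := Real.sqrt_pos.mpr (by positivity)
  have hS2 : 0 < S₂ := Real.sqrt_pos.mpr (by positivity)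
  have hS1sq : S₁^2 = 2 * K * r := Real.sq_sqrt (by positivity)
  have hS2sq : S₂^2 = K * ε := Real.sq_sqrt (by positivity)
  set D := 2 * S₁ + S₂ with hDdef
  have hD : 0 < D := by positivity
  have hbpos : 0 < b := by rw [hb]; positivity
  set θ := S₁ / (K * Δ) with hθdef
  have hθ : 0 < θ := by positivity
  haveI : IsProbabilityMeasure (laplaceMeasure b) := lap_prob hbpos
  set ν := Measure.pi fun _ : Fin K => laplaceMeasure b with hνdef
  -- measurability
  have hLmeas : Measurable fun x : Fin K → ℝ => ∑ j, (|x j + s j| - |x j|) := by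
    apply Finset.measurable_sum
    intro j _
    fun_prop
  -- step 1: Markov
  have markov : ν {x | ε * b < ∑ j, (|x j + s j| - |x j|)}
      ≤ ENNReal.ofReal (Real.exp (-(θ * (ε * b))))
        * ∫⁻ x, ENNReal.ofReal (Real.exp (θ * ∑ j, (|x j + s j| - |x j|))) ∂ν := by
    rw [← lintegral_const_mul _ (by fun_prop)]
    have hsetm : MeasurableSet {x : Fin K → ℝ | ε * b < ∑ j, (|x j + s j| - |x j|)} :=
      measurableSet_lt measurable_const hLmeas
    calc ν {x | ε * b < ∑ j, (|x j + s j| - |x j|)}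
        = ∫⁻ x in {x | ε * b < ∑ j, (|x j + s j| - |x j|)}, 1 ∂ν := by
          rw [setLIntegral_one]
      _ ≤ ∫⁻ x in {x | ε * b < ∑ j, (|x j + s j| - |x j|)},
            ENNReal.ofReal (Real.exp (-(θ * (ε * b))))
              * ENNReal.ofReal (Real.exp (θ * ∑ j, (|x j + s j| - |x j|))) ∂ν := by
          apply setLIntegral_mono (by fun_prop)
          intro x hx
          rw [← ENNReal.ofReal_mul (Real.exp_nonneg _), ← Real.exp_add]
          rw [ENNReal.one_le_ofReal]
          apply Real.one_le_exp
          simp only [mem_setOf_eq] at hx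
          nlinarith [hx, hθ.le]
      _ ≤ _ := setLIntegral_le_lintegral _ _
  -- step 2: factorize the mgf
  have hfac : ∫⁻ x, ENNReal.ofReal (Real.exp (θ * ∑ j, (|x j + s j| - |x j|))) ∂ν
      = ∏ j : Fin K, ∫⁻ t, ENNReal.ofReal (Real.exp (θ * (|t + s j| - |t|))) ∂laplaceMeasure b := by
    rw [← lintegral_pi_prod _ (fun i => inferInstance) _ (fun i => by fun_prop)]
    apply lintegral_congr
    intro x
    rw [Finset.mul_sum, Real.exp_sum, ENNReal.ofReal_prod_of_nonneg
      (fun i _ => Real.exp_nonneg _)]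
  -- step 3: per-coordinate bound
  have hcoord : ∀ j : Fin K,
      ∫⁻ t, ENNReal.ofReal (Real.exp (θ * (|t + s j| - |t|))) ∂laplaceMeasure b
        ≤ ENNReal.ofReal (Real.exp (θ^2 * Δ^2 / 2 + θ * Δ^2 / b)) := by
    intro j
    refine (mgf_le hbpos hθ.le).trans (ENNReal.ofReal_le_ofReal (Real.exp_le_exp.mpr ?_))
    have hsq : (s j)^2 ≤ Δ^2 := by
      have := abs_le.mp (hs j)
      nlinarith
    have h1 : θ^2 * (s j)^2 / 2 ≤ θ^2 * Δ^2 / 2 := by nlinarith [sq_nonneg θ]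
    have hnum : θ * (s j)^2 ≤ θ * Δ^2 := by nlinarith [hθ.le]
    have h2 : θ * (s j)^2 / b ≤ θ * Δ^2 / b := by
      rw [div_le_div_iff_of_pos_right]
      · exact hnum
      · exact hbpos
    linarith
  have hprod : (∏ j : Fin K, ∫⁻ t, ENNReal.ofReal (Real.exp (θ * (|t + s j| - |t|)))
        ∂laplaceMeasure b)
      ≤ ENNReal.ofReal (Real.exp (K * (θ^2 * Δ^2 / 2 + θ * Δ^2 / b))) := by
    calc _ ≤ ∏ _j : Fin K, ENNReal.ofReal (Real.exp (θ^2 * Δ^2 / 2 + θ * Δ^2 / b)) :=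
          Finset.prod_le_prod' fun j _ => hcoord j
      _ = ENNReal.ofReal (Real.exp (θ^2 * Δ^2 / 2 + θ * Δ^2 / b)) ^ K := by
          rw [Finset.prod_const, Finset.card_univ, Fintype.card_fin]
      _ = ENNReal.ofReal (Real.exp (θ^2 * Δ^2 / 2 + θ * Δ^2 / b) ^ K) :=
          (ENNReal.ofReal_pow (Real.exp_nonneg _) K).symm
      _ = _ := by rw [← Real.exp_nat_mul]
  -- step 4: arithmetic
  have harith : -(θ * (ε * b)) + K * (θ^2 * Δ^2 / 2 + θ * Δ^2 / b) ≤ Real.log δ := by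
    have hlogδ : Real.log δ = -r := by
      rw [hrdef, one_div, Real.log_inv, neg_neg]
    have hE : -(θ * (ε * b)) + K * (θ^2 * Δ^2 / 2 + θ * Δ^2 / b)
        = -(S₁*D)/K + S₁^2/(2*K) + S₁*ε/D := by
      rw [hθdef, hb]
      field_simp
      ring
    have h1 : S₁*ε/D ≤ S₁*S₂/K := by
      rw [div_le_div_iff₀ hD hKpos]
      calc S₁ * ε * (K:ℝ) = S₁ * S₂^2 := by rw [hS2sq]; ring
        _ ≤ 2*S₁^2*S₂ + S₁*S₂^2 := by nlinarith [hS1.le, hS2.le, sq_nonneg S₁]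
        _ = S₁ * S₂ * D := by rw [hDdef]; ring
    have hK0 : (K:ℝ) ≠ 0 := ne_of_gt hKpos
    have h2 : -(S₁*D)/K + S₁^2/(2*K) + S₁*S₂/K = -3*r := by
      have hmid : -(S₁*(2*S₁+S₂))/K + S₁^2/(2*K) + S₁*S₂/K = (-3/2) * S₁^2 / K := by
        field_simp
        ring
      rw [hDdef, hmid, hS1sq]
      field_simp
    rw [hE, hlogδ]
    linarith
  -- combine
  refine markov.trans ?_
  calc ENNReal.ofReal (Real.exp (-(θ * (ε * b))))
        * ∫⁻ x, ENNReal.ofReal (Real.exp (θ * ∑ j, (|x j + s j| - |x j|))) ∂ν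
      ≤ ENNReal.ofReal (Real.exp (-(θ * (ε * b))))
        * ENNReal.ofReal (Real.exp (K * (θ^2 * Δ^2 / 2 + θ * Δ^2 / b))) := by
        rw [hfac]
        exact _root_.mul_le_mul_right hprod _
    _ = ENNReal.ofReal (Real.exp (-(θ * (ε * b)) + K * (θ^2 * Δ^2 / 2 + θ * Δ^2 / b))) := by
        rw [← ENNReal.ofReal_mul (Real.exp_nonneg _), ← Real.exp_add]
    _ ≤ ENNReal.ofReal δ := by
        apply ENNReal.ofReal_le_ofReal
        calc Real.exp (-(θ * (ε * b)) + K * (θ^2 * Δ^2 / 2 + θ * Δ^2 / b))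
            ≤ Real.exp (Real.log δ) := Real.exp_le_exp.mpr harith
          _ = δ := Real.exp_log hδ.1

lemma shift_bound {K : ℕ} (hK : 1 ≤ K) {ε δ Δ b : ℝ} (hε : 0 < ε) (hδ : δ ∈ Set.Ioo (0:ℝ) 1)
    (hΔ : 0 < Δ)
    (hb : b = (2 * Real.sqrt (2 * K * Real.log (1 / δ)) + Real.sqrt (K * ε)) * Δ / ε)
    (s : Fin K → ℝ) (hs : ∀ j, |s j| ≤ Δ) {B : Set (Fin K → ℝ)} (hB : MeasurableSet B) :
    (Measure.pi fun _ : Fin K => laplaceMeasure b) ((fun x => x + s) ⁻¹' B)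
      ≤ ENNReal.ofReal (Real.exp ε) * (Measure.pi fun _ : Fin K => laplaceMeasure b) B
        + ENNReal.ofReal δ := by
  have hKpos : (0:ℝ) < K := by exact_mod_cast hK
  have hbpos : 0 < b := by
    rw [hb]
    have hr : 0 < Real.log (1 / δ) := Real.log_pos (one_lt_one_div hδ.1 hδ.2)
    positivity
  haveI hlp : IsProbabilityMeasure (laplaceMeasure b) := lap_prob hbpos
  set ν := Measure.pi fun _ : Fin K => laplaceMeasure b with hνdef
  set q : (Fin K → ℝ) → ℝ≥0∞ :=
    fun x => ∏ j, ENNReal.ofReal ((1 / (2 * b)) * Real.exp (-|x j| / b)) with hqdef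
  have hqmeas : Measurable q := by
    apply Finset.measurable_prod
    intro j _
    fun_prop
  have hν : ν = (volume : Measure (Fin K → ℝ)).withDensity q := by
    rw [hνdef]
    have : ∀ _j : Fin K, laplaceMeasure b
        = (volume : Measure ℝ).withDensity
            (fun t => ENNReal.ofReal ((1 / (2 * b)) * Real.exp (-|t| / b))) := fun _ => rfl
    calc Measure.pi (fun _ : Fin K => laplaceMeasure b)
        = Measure.pi (fun _ : Fin K => (volume : Measure ℝ).withDensity
            (fun t => ENNReal.ofReal ((1 / (2 * b)) * Real.exp (-|t| / b)))) := by rfl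
      _ = (Measure.pi fun _ : Fin K => (volume : Measure ℝ)).withDensity q :=
          pi_withDensity _ _ (fun i => by fun_prop)
            (fun i => by exact inferInstanceAs (SigmaFinite (laplaceMeasure b)))
      _ = (volume : Measure (Fin K → ℝ)).withDensity q := by
          rw [← MeasureTheory.volume_pi]
  -- the bad event
  set F := {x : Fin K → ℝ | ε * b < ∑ j, (|x j + s j| - |x j|)} with hFdef
  have hLmeas : Measurable fun x : Fin K → ℝ => ∑ j, (|x j + s j| - |x j|) := by
    apply Finset.measurable_sum
    intro j _
    fun_prop
  have hFmeas : MeasurableSet F := measurableSet_lt measurable_const hLmeas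
  have hF : ν F ≤ ENNReal.ofReal δ := chernoff hK hε hδ hΔ hb s hs
  set A := (fun x : Fin K → ℝ => x + s) ⁻¹' B with hAdef
  have hAmeas : MeasurableSet A := (measurable_add_const s) hB
  have hsplit : ν A ≤ ν (A ∩ Fᶜ) + ν F := by
    calc ν A ≤ ν ((A ∩ Fᶜ) ∪ F) := by
          apply measure_mono
          intro x hx
          by_cases hxf : x ∈ F
          · exact Or.inr hxf
          · exact Or.inl ⟨hx, hxf⟩
      _ ≤ ν (A ∩ Fᶜ) + ν F := measure_union_le _ _
  have hmain : ν (A ∩ Fᶜ) ≤ ENNReal.ofReal (Real.exp ε) * ν B := by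
    set qs : (Fin K → ℝ) → ℝ≥0∞ :=
      fun x => ∏ j, ENNReal.ofReal ((1 / (2 * b)) * Real.exp (-|x j + s j| / b)) with hqsdef
    have hqsmeas : Measurable qs := by
      apply Finset.measurable_prod
      intro j _
      fun_prop
    have hpt : ∀ x ∈ Fᶜ, q x ≤ ENNReal.ofReal (Real.exp ε) * qs x := by
      intro x hx
      have hsum : ∑ j, (|x j + s j| - |x j|) ≤ ε * b := by
        simp only [hFdef, mem_compl_iff, mem_setOf_eq, not_lt] at hx
        exact hx
      have hq_eq : q x = ENNReal.ofReal (Real.exp ((∑ j, (|x j + s j| - |x j|)) / b)) * qs x := by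
        rw [hqdef, hqsdef, Finset.sum_div, Real.exp_sum,
          ENNReal.ofReal_prod_of_nonneg (fun i _ => Real.exp_nonneg _), ← Finset.prod_mul_distrib]
        apply Finset.prod_congr rfl
        intro j _
        rw [← ENNReal.ofReal_mul (Real.exp_nonneg _)]
        congr 1
        rw [mul_left_comm, ← Real.exp_add]
        congr 2
        field_simp
        ring
      rw [hq_eq]
      apply _root_.mul_le_mul_left
      apply ENNReal.ofReal_le_ofReal
      apply Real.exp_le_exp.mpr
      rw [div_le_iff₀ hbpos]
      exact hsum
    have hchg : ∫⁻ x in A, qs x ∂(volume : Measure (Fin K → ℝ)) = ν B := by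
      rw [← lintegral_indicator hAmeas]
      have hfun : ∀ x : Fin K → ℝ, A.indicator qs x = B.indicator q (x + s) := by
        intro x
        by_cases hx : x ∈ A
        · rw [indicator_of_mem hx, indicator_of_mem (by exact hx)]
          rw [hqdef, hqsdef]
          apply Finset.prod_congr rfl
          intro j _
          rfl
        · rw [indicator_of_notMem hx, indicator_of_notMem (by exact hx)]
      calc ∫⁻ x, A.indicator qs x ∂(volume : Measure (Fin K → ℝ))
          = ∫⁻ x, B.indicator q (x + s) ∂(volume : Measure (Fin K → ℝ)) :=
            lintegral_congr hfun
        _ = ∫⁻ x, B.indicator q x ∂(volume : Measure (Fin K → ℝ)) :=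
            lintegral_add_right_eq_self _ s
        _ = ∫⁻ x in B, q x ∂(volume : Measure (Fin K → ℝ)) := lintegral_indicator hB _
        _ = ν B := by rw [hν, withDensity_apply _ hB]
    calc ν (A ∩ Fᶜ) = ∫⁻ x in A ∩ Fᶜ, q x ∂(volume : Measure (Fin K → ℝ)) := by
          rw [hν, withDensity_apply _ (hAmeas.inter hFmeas.compl)]
      _ ≤ ∫⁻ x in A ∩ Fᶜ, ENNReal.ofReal (Real.exp ε) * qs x
            ∂(volume : Measure (Fin K → ℝ)) := by
          apply setLIntegral_mono (by fun_prop)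
          intro x hx
          exact hpt x hx.2
      _ = ENNReal.ofReal (Real.exp ε) * ∫⁻ x in A ∩ Fᶜ, qs x
            ∂(volume : Measure (Fin K → ℝ)) := lintegral_const_mul _ hqsmeas
      _ ≤ ENNReal.ofReal (Real.exp ε) * ∫⁻ x in A, qs x ∂(volume : Measure (Fin K → ℝ)) := by
          apply _root_.mul_le_mul_right
          exact lintegral_mono_set inter_subset_left
      _ = ENNReal.ofReal (Real.exp ε) * ν B := by rw [hchg]
  calc ν A ≤ ν (A ∩ Fᶜ) + ν F := hsplit
    _ ≤ ENNReal.ofReal (Real.exp ε) * ν B + ENNReal.ofReal δ := add_le_add hmain hF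

end LDP

open Set in
/-- **The vector Laplace mechanism on clipped log-likelihoods is `(ε,δ)`-locally private.**
Let `g 1, …, g K : [N'] → ℝ` satisfy `1/(TKM) ≤ g j v ≤ 1/M` (clipped distributions, so each
log-likelihood has sensitivity `log(KT)`), let `h` be any random map from `Y` to `[N']`
(a kernel `hk`), and let `Lap 1, …, Lap K` be i.i.d. Laplace noises with scale
`(2√(2K ln(1/δ)) + √(Kε)) · log(KT)/ε`, independent of `h`.  Then the randomized map
`R y = (−c·(log (g j (h y)) + Lap j + log M − c'))_{j ∈ [K]}` is `(ε,δ)`-locally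
differentially private. -/
theorem laplace_mechanism_approx_ldp {Y : Type*} (ε δ : ℝ) (hε : 0 < ε)
    (hδ : δ ∈ Set.Ioo (0 : ℝ) 1)
    (K T M N' : ℕ) (hK : 1 ≤ K) (hT : 2 ≤ T) (hM : 1 ≤ M) (hN' : 1 ≤ N')
    (g : Fin K → Fin N' → ℝ)
    (hg : ∀ j v, 1 / ((T : ℝ) * K * M) ≤ g j v ∧ g j v ≤ 1 / (M : ℝ))
    (hk : Y → Measure (Fin N')) (hkprob : ∀ y, IsProbabilityMeasure (hk y))
    (b : ℝ)
    (hb : b = (2 * Real.sqrt (2 * K * Real.log (1 / δ)) + Real.sqrt (K * ε)) *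
      Real.log ((K : ℝ) * T) / ε)
    (c c' : ℝ)
    (R : Y → Measure (Fin K → ℝ))
    (hR : ∀ y, R y =
      Measure.map
        (fun p : Fin N' × (Fin K → ℝ) => fun j : Fin K =>
          -c * (Real.log (g j p.1) + p.2 j + Real.log (M : ℝ) - c'))
        ((hk y).prod (Measure.pi fun _ : Fin K => laplaceMeasure b))) :
    ∀ (y y' : Y) (S : Set (Fin K → ℝ)), MeasurableSet S →
      R y S ≤ ENNReal.ofReal (Real.exp ε) * R y' S + ENNReal.ofReal δ := by
  intro y y' S hS
  have hKpos : (1:ℝ) ≤ K := by exact_mod_cast hK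
  have hTpos : (2:ℝ) ≤ T := by exact_mod_cast hT
  have hMpos : (1:ℝ) ≤ M := by exact_mod_cast hM
  set Δ : ℝ := Real.log ((K:ℝ) * T) with hΔdef
  have hΔ : 0 < Δ := Real.log_pos (by nlinarith)
  have hbpos : 0 < b := by
    rw [hb]
    have hr : 0 < Real.log (1 / δ) := Real.log_pos (one_lt_one_div hδ.1 hδ.2)
    positivity
  haveI hlp : IsProbabilityMeasure (laplaceMeasure b) := LDP.lap_prob hbpos
  set ν := Measure.pi fun _ : Fin K => laplaceMeasure b with hνdef
  haveI : IsProbabilityMeasure ν := by rw [hνdef]; infer_instance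
  set f : Fin N' × (Fin K → ℝ) → (Fin K → ℝ) := fun p => fun j : Fin K =>
    -c * (Real.log (g j p.1) + p.2 j + Real.log (M : ℝ) - c') with hfdef
  have hf : Measurable f := by
    apply measurable_pi_lambda
    intro j
    have h1 : Measurable fun p : Fin N' × (Fin K → ℝ) => Real.log (g j p.1) :=
      (Measurable.of_discrete (f := fun v : Fin N' => Real.log (g j v))).comp measurable_fst
    have h2 : Measurable fun p : Fin N' × (Fin K → ℝ) => p.2 j :=
      (measurable_pi_apply j).comp measurable_snd
    exact (((h1.add h2).add_const (Real.log (M:ℝ))).sub_const c').const_mul (-c)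
  set G : Fin N' → ℝ≥0∞ := fun v => ν (Prod.mk v ⁻¹' (f ⁻¹' S)) with hGdef
  -- pairwise bound
  have hgpos : ∀ j w, 0 < g j w := by
    intro j w
    refine lt_of_lt_of_le ?_ (hg j w).1
    positivity
  have hpair : ∀ v v' : Fin N', G v ≤ ENNReal.ofReal (Real.exp ε) * G v' + ENNReal.ofReal δ := by
    intro v v'
    set s : Fin K → ℝ := fun j => Real.log (g j v) - Real.log (g j v') with hsdef
    have hsb : ∀ j, |s j| ≤ Δ := by
      intro j
      have hMne : (M:ℝ) ≠ 0 := by positivity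
      have hTKne : (T:ℝ) * K ≠ 0 := by positivity
      have hdiff : Real.log (1 / (M:ℝ)) - Real.log (1 / ((T:ℝ) * K * M)) = Δ := by
        rw [one_div, one_div, Real.log_inv, Real.log_inv, hΔdef]
        rw [Real.log_mul hTKne hMne]
        rw [show (T:ℝ) * K = (K:ℝ) * T from mul_comm _ _]
        ring
      have hub : ∀ w, Real.log (g j w) ≤ Real.log (1 / (M:ℝ)) := by
        intro w
        exact Real.log_le_log (hgpos j w) (hg j w).2
      have hlb : ∀ w, Real.log (1 / ((T:ℝ) * K * M)) ≤ Real.log (g j w) := by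
        intro w
        exact Real.log_le_log (by positivity) (hg j w).1
      rw [abs_le]
      constructor
      · have := hub v'
        have := hlb v
        rw [hsdef]
        simp only
        linarith
      · have := hub v
        have := hlb v'
        rw [hsdef]
        simp only
        linarith
    have hBmeas : MeasurableSet (Prod.mk v' ⁻¹' (f ⁻¹' S)) :=
      measurable_prodMk_left (hf hS)
    have hset : (Prod.mk v ⁻¹' (f ⁻¹' S))
        = (fun x => x + s) ⁻¹' (Prod.mk v' ⁻¹' (f ⁻¹' S)) := by
      ext x
      simp only [mem_preimage]
      have hfeq : f (v, x) = f (v', x + s) := by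
        funext j
        simp only [hfdef, hsdef, Pi.add_apply]
        ring
      rw [hfeq]
    rw [hGdef]
    simp only
    rw [hset]
    exact LDP.shift_bound hK hε hδ hΔ hb s hsb hBmeas
  -- choose minimizer
  haveI : Nonempty (Fin N') := ⟨⟨0, hN'⟩⟩
  obtain ⟨v₀, -, hv₀⟩ := Finset.exists_min_image (Finset.univ : Finset (Fin N')) G
    ⟨Classical.arbitrary (Fin N'), Finset.mem_univ _⟩
  haveI := hkprob y
  haveI := hkprob y'
  have hy : R y S = ∫⁻ v, G v ∂hk y := by
    rw [hR y, Measure.map_apply hf hS, Measure.prod_apply (hf hS)]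
  have hy' : R y' S = ∫⁻ v, G v ∂hk y' := by
    rw [hR y', Measure.map_apply hf hS, Measure.prod_apply (hf hS)]
  rw [hy, hy']
  calc ∫⁻ v, G v ∂hk y
      ≤ ∫⁻ _v, (ENNReal.ofReal (Real.exp ε) * G v₀ + ENNReal.ofReal δ) ∂hk y :=
        lintegral_mono fun v => hpair v v₀
    _ = ENNReal.ofReal (Real.exp ε) * G v₀ + ENNReal.ofReal δ := by
        rw [lintegral_const, measure_univ, mul_one]
    _ ≤ ENNReal.ofReal (Real.exp ε) * ∫⁻ v, G v ∂hk y' + ENNReal.ofReal δ := by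
        apply add_le_add_left
        apply _root_.mul_le_mul_right
        calc G v₀ = ∫⁻ _v, G v₀ ∂hk y' := by rw [lintegral_const, measure_univ, mul_one]
          _ ≤ ∫⁻ v, G v ∂hk y' := lintegral_mono fun v => hv₀ v (Finset.mem_univ v)
end

section
/- Let ε > 0, let N be a positive integer, and let q_1,...,q_N be nonnegative reals satisfying the likelihood-ratio (differential privacy) condition q_i ≤ e^ε·q_j for all i, j ∈ [N]. Then (1/N)·∑_{i=1}^N q_i² − ( (1/N)·∑_{i=1}^N q_i )² ≤ min{(e^ε − 1)², 1}·e^ε·(min_{i∈[N]} q_i)·(∑_{i=1}^N q_i) / N. -/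
open Finset

lemma key_pair (E m a b : ℝ) (hE : 1 ≤ E) (hm : 0 ≤ m) (ha : 0 ≤ a) (hb : 0 ≤ b)
    (hab : a ≤ E * b) (hba : b ≤ E * a) (haE : a ≤ E * m) (hbE : b ≤ E * m) :
    (a - b) ^ 2 ≤ min ((E - 1) ^ 2) 1 * E * m * (a + b) := by
  have hE0 : (0:ℝ) ≤ E := by linarith
  rcases min_cases ((E - 1) ^ 2) 1 with ⟨h, hle⟩ | ⟨h, hle⟩ <;> rw [h]
  · rcases le_total a b with hab' | hab'
    · have h1 : (b - a) ^ 2 ≤ ((E - 1) * a) ^ 2 := by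
        apply pow_le_pow_left₀ (by linarith) (by linarith)
      have h2 : a * a ≤ E * m * (a + b) := by
        nlinarith [mul_le_mul_of_nonneg_right haE ha, mul_nonneg (mul_nonneg hE0 hm) hb]
      have h3 := mul_le_mul_of_nonneg_left h2 (sq_nonneg (E - 1))
      nlinarith [h1, h3]
    · have h1 : (a - b) ^ 2 ≤ ((E - 1) * b) ^ 2 := by
        apply pow_le_pow_left₀ (by linarith) (by linarith)
      have h2 : b * b ≤ E * m * (a + b) := by
        nlinarith [mul_le_mul_of_nonneg_right hbE hb, mul_nonneg (mul_nonneg hE0 hm) ha]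
      have h3 := mul_le_mul_of_nonneg_left h2 (sq_nonneg (E - 1))
      nlinarith [h1, h3]
  · nlinarith [mul_le_mul_of_nonneg_right haE ha, mul_le_mul_of_nonneg_right hbE hb,
      mul_nonneg ha hb]

/-- **Variance bound for the output densities of a pure locally private channel.**
If the nonnegative reals `q 1, ..., q N` satisfy the likelihood-ratio condition
`q i ≤ e^ε · q j` for all `i, j` (as the output densities of an `(ε,0)`-differentially
private channel at a fixed output do), then their empirical variance is at most
`min{(e^ε − 1)², 1} · e^ε · (min_i q i) · (∑_i q i) / N`. -/
theorem dp_variance_bound (ε : ℝ) (hε : 0 < ε) (N : ℕ) (hN : 0 < N)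
    (q : Fin N → ℝ) (hq : ∀ i, 0 ≤ q i)
    (hdp : ∀ i j, q i ≤ Real.exp ε * q j) :
    (1 / (N : ℝ)) * ∑ i, (q i) ^ 2 - ((1 / (N : ℝ)) * ∑ i, q i) ^ 2 ≤
      min ((Real.exp ε - 1) ^ 2) 1 * Real.exp ε *
        (Finset.univ.inf' ⟨⟨0, hN⟩, Finset.mem_univ _⟩ q) * (∑ i, q i) / N := by
  set E := Real.exp ε with hEdef
  set m := Finset.univ.inf' ⟨⟨0, hN⟩, Finset.mem_univ _⟩ q with hmdef
  set c := min ((E - 1) ^ 2) 1 with hcdef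
  set S := ∑ i, q i with hSdef
  set A := ∑ i, (q i) ^ 2 with hAdef
  have hE : 1 ≤ E := Real.one_le_exp hε.le
  have hmle : ∀ i, m ≤ q i := fun i => Finset.inf'_le q (Finset.mem_univ i)
  have hm : 0 ≤ m := by
    obtain ⟨k, -, hk⟩ := Finset.exists_mem_eq_inf' (⟨⟨0, hN⟩, Finset.mem_univ _⟩ :
      (Finset.univ : Finset (Fin N)).Nonempty) q
    rw [hmdef, hk]; exact hq k
  have hqE : ∀ i, q i ≤ E * m := by
    obtain ⟨k, -, hk⟩ := Finset.exists_mem_eq_inf' (⟨⟨0, hN⟩, Finset.mem_univ _⟩ :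
      (Finset.univ : Finset (Fin N)).Nonempty) q
    intro i; rw [hmdef, hk]; exact hdp i k
  have hNpos : (0:ℝ) < (N:ℝ) := by exact_mod_cast hN
  have hiden : ∑ i, ∑ j, (q i - q j) ^ 2 = 2 * N * A - 2 * S ^ 2 := by
    have : ∀ i : Fin N, ∑ j, (q i - q j) ^ 2 = N * q i ^ 2 - 2 * q i * S + A := by
      intro i
      have : ∑ j, (q i - q j) ^ 2 = ∑ j, (q i ^ 2 - 2 * q i * q j + q j ^ 2) := by
        apply Finset.sum_congr rfl; intro j _; ring
      rw [this, Finset.sum_add_distrib, Finset.sum_sub_distrib, Finset.sum_const,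
        Finset.card_univ, Fintype.card_fin, ← Finset.mul_sum, ← hSdef, ← hAdef]
      push_cast; ring
    rw [Finset.sum_congr rfl (fun i _ => this i)]
    simp only [Finset.sum_add_distrib, Finset.sum_sub_distrib, Finset.sum_const,
      Finset.card_univ, Fintype.card_fin, ← Finset.mul_sum, ← Finset.sum_mul,
      nsmul_eq_mul, ← hAdef, ← hSdef]
    push_cast; ring
  have hbound : ∑ i, ∑ j, (q i - q j) ^ 2 ≤ c * E * m * (2 * N * S) := by
    have h1 : ∑ i, ∑ j, (q i - q j) ^ 2 ≤ ∑ i : Fin N, ∑ j, c * E * m * (q i + q j) := by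
      apply Finset.sum_le_sum; intro i _
      apply Finset.sum_le_sum; intro j _
      exact key_pair E m (q i) (q j) hE hm (hq i) (hq j) (hdp i j) (hdp j i) (hqE i) (hqE j)
    have h2 : ∑ i : Fin N, ∑ j, c * E * m * (q i + q j) = c * E * m * (2 * N * S) := by
      simp only [← Finset.mul_sum, Finset.sum_add_distrib, Finset.sum_const,
        Finset.card_univ, Fintype.card_fin, nsmul_eq_mul, ← hSdef]
      push_cast; ring
    linarith
  have key2 : (N:ℝ) * A - S ^ 2 ≤ (N:ℝ) * (c * E * m * S) := by nlinarith [hiden, hbound]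
  have e1 : (1 / (N:ℝ)) * A - ((1 / (N:ℝ)) * S) ^ 2 = ((N:ℝ) * A - S ^ 2) / (N:ℝ) ^ 2 := by
    field_simp
  have e2 : c * E * m * S / (N:ℝ) = (N:ℝ) * (c * E * m * S) / (N:ℝ) ^ 2 := by
    field_simp
  rw [e1, e2]
  exact div_le_div_of_nonneg_right key2 (by positivity)
end
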